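/- arXiv:2604.25144 — 3 statements merged into one kernel-verified Lean document; each statement's English description precedes it below -/
import Mathlib

section
/- Let n ≥ 1 and p > 1. For every nonnegative smooth function f : ℝ^n × ℝ → ℝ with compact support contained in H = ℝ^n × (0, ∞), one has ∫_H ‖∇f(x,y)‖^p · y^{p−n−1} dx dy ≥ (n/p)^p · ∫_H f(x,y)^p · y^{−n−1} dx dy. -/
open MeasureTheory

noncomputable section

/-- The `i`-th horizontal coordinate direction in `ℝ^n × ℝ`. -/
def ex (n : ℕ) (i : Fin n) : (Fin n → ℝ) × ℝ := (Pi.single i 1, 0)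

/-- The vertical coordinate direction in `ℝ^n × ℝ`. -/
def ey (n : ℕ) : (Fin n → ℝ) × ℝ := (0, 1)

/-- Partial derivative in the direction `v`. -/
def pderiv' (n : ℕ) (v : (Fin n → ℝ) × ℝ) (f : (Fin n → ℝ) × ℝ → ℝ) :
    (Fin n → ℝ) × ℝ → ℝ := fun p => fderiv ℝ f p v

/-- The Euclidean Laplacian on `ℝ^n × ℝ`: the sum of the second partial
derivatives in all `n+1` variables. -/
def eucLap (n : ℕ) (f : (Fin n → ℝ) × ℝ → ℝ) : (Fin n → ℝ) × ℝ → ℝ := fun p =>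
  (∑ i, pderiv' n (ex n i) (pderiv' n (ex n i) f) p) +
    pderiv' n (ey n) (pderiv' n (ey n) f) p

/-- The squared norm of the Euclidean gradient of `f` on `ℝ^n × ℝ`. -/
def gradSq (n : ℕ) (f : (Fin n → ℝ) × ℝ → ℝ) : (Fin n → ℝ) × ℝ → ℝ := fun p =>
  (∑ i, (pderiv' n (ex n i) f p) ^ 2) + (pderiv' n (ey n) f p) ^ 2

/-- The hyperbolic Laplacian of the upper half-space model:
`(Lf)(x,y) = y²·(Δf)(x,y) − (n−1)·y·(∂_y f)(x,y)`. -/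
def hypLap (n : ℕ) (f : (Fin n → ℝ) × ℝ → ℝ) : (Fin n → ℝ) × ℝ → ℝ := fun p =>
  p.2 ^ 2 * eucLap n f p - ((n : ℝ) - 1) * p.2 * pderiv' n (ey n) f p

/-- The open upper half-space `H = ℝ^n × (0, ∞)`. -/
def upperH (n : ℕ) : Set ((Fin n → ℝ) × ℝ) := {p | 0 < p.2}

end

lemma young_aux (p ν F G y : ℝ) (hp : 1 < p) (hν : 0 < ν) (hF : 0 ≤ F) (hG : 0 ≤ G)
    (hy : 0 < y) :
    p * F ^ (p - 1) * G * y ^ (-ν) ≤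
      (p - 1) * (ν / p) * (F ^ p * y ^ (-ν - 1)) +
        (p / ν) ^ (p - 1) * (G ^ p * y ^ (p - ν - 1)) := by
  have hp0 : (0:ℝ) < p := lt_trans one_pos hp
  have hp1 : (0:ℝ) < p - 1 := sub_pos.2 hp
  set w₁ : ℝ := (p - 1) / p with hw₁
  set w₂ : ℝ := 1 / p with hw₂
  have hw : w₁ + w₂ = 1 := by rw [hw₁, hw₂]; field_simp; ring
  have hw₁0 : 0 ≤ w₁ := le_of_lt (div_pos hp1 hp0)
  have hw₂0 : 0 ≤ w₂ := le_of_lt (div_pos one_pos hp0)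
  set P₁ : ℝ := ν / p * (F ^ p * y ^ (-ν - 1)) with hP₁
  set P₂ : ℝ := (p / ν) ^ (p - 1) * (G ^ p * y ^ (p - ν - 1)) with hP₂
  have hP₁0 : 0 ≤ P₁ := by positivity
  have hP₂0 : 0 ≤ P₂ := by positivity
  have key := Real.geom_mean_le_arith_mean2_weighted hw₁0 hw₂0 hP₁0 hP₂0 hw
  have h1 : P₁ ^ w₁ = (ν / p) ^ w₁ * F ^ (p - 1) * y ^ ((-ν - 1) * w₁) := by
    rw [hP₁, Real.mul_rpow (by positivity) (by positivity),
      Real.mul_rpow (by positivity) (by positivity),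
      ← Real.rpow_mul hF, ← Real.rpow_mul hy.le,
      show p * w₁ = p - 1 by rw [hw₁]; field_simp]
    ring
  have h2 : P₂ ^ w₂ = (p / ν) ^ ((p - 1) * w₂) * G * y ^ ((p - ν - 1) * w₂) := by
    rw [hP₂, Real.mul_rpow (by positivity) (by positivity),
      Real.mul_rpow (by positivity) (by positivity),
      ← Real.rpow_mul (by positivity : (0:ℝ) ≤ p / ν),
      ← Real.rpow_mul hG, ← Real.rpow_mul hy.le,
      show p * w₂ = 1 by rw [hw₂]; field_simp, Real.rpow_one]
    ring
  have hcoef : (ν / p) ^ w₁ * (p / ν) ^ ((p - 1) * w₂) = 1 := by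
    rw [show (p - 1) * w₂ = w₁ by rw [hw₁, hw₂]; ring,
      ← Real.mul_rpow (by positivity) (by positivity),
      show ν / p * (p / ν) = 1 by field_simp, Real.one_rpow]
  have hyexp : y ^ ((-ν - 1) * w₁) * y ^ ((p - ν - 1) * w₂) = y ^ (-ν) := by
    rw [← Real.rpow_add hy]
    congr 1
    rw [hw₁, hw₂]
    field_simp
    ring
  have hlhs : P₁ ^ w₁ * P₂ ^ w₂ = F ^ (p - 1) * G * y ^ (-ν) := by
    rw [h1, h2]
    calc (ν / p) ^ w₁ * F ^ (p - 1) * y ^ ((-ν - 1) * w₁) *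
          ((p / ν) ^ ((p - 1) * w₂) * G * y ^ ((p - ν - 1) * w₂))
        = ((ν / p) ^ w₁ * (p / ν) ^ ((p - 1) * w₂)) * (F ^ (p - 1) * G) *
            (y ^ ((-ν - 1) * w₁) * y ^ ((p - ν - 1) * w₂)) := by ring
      _ = F ^ (p - 1) * G * y ^ (-ν) := by rw [hcoef, hyexp]; ring
  rw [hlhs] at key
  have hfin := mul_le_mul_of_nonneg_left key hp0.le
  calc p * F ^ (p - 1) * G * y ^ (-ν) = p * (F ^ (p - 1) * G * y ^ (-ν)) := by ring
    _ ≤ p * (w₁ * P₁ + w₂ * P₂) := hfin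
    _ = (p - 1) * (ν / p) * (F ^ p * y ^ (-ν - 1)) +
        (p / ν) ^ (p - 1) * (G ^ p * y ^ (p - ν - 1)) := by
        rw [hP₁, hP₂, hw₁, hw₂]; field_simp


/-- the sharp hyperbolic `p`-Poincaré inequality
`∫_H ‖∇f‖^p y^{p−n−1} ≥ (n/p)^p ∫_H f^p y^{−n−1}` for nonnegative
`f ∈ C_c^∞(H)`. -/
theorem stmt7 (n : ℕ) (hn : 1 ≤ n) (p : ℝ) (hp : 1 < p)
    (f : (Fin n → ℝ) × ℝ → ℝ) (hf : ContDiff ℝ (⊤ : ℕ∞) f)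
    (hfc : HasCompactSupport f) (hfH : tsupport f ⊆ upperH n)
    (hfpos : ∀ q, 0 ≤ f q) :
    ((n : ℝ) / p) ^ p * ∫ q in upperH n, f q ^ p * q.2 ^ (-(n : ℝ) - 1) ≤
      ∫ q in upperH n, Real.sqrt (gradSq n f q) ^ p * q.2 ^ (p - n - 1) := by
  have hp0 : (0:ℝ) < p := lt_trans one_pos hp
  have hp1 : (0:ℝ) < p - 1 := sub_pos.2 hp
  have hn0 : (0:ℝ) < (n:ℝ) := by exact_mod_cast hn
  set g : (Fin n → ℝ) × ℝ → ℝ := fun q => Real.sqrt (gradSq n f q) with hg_def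
  set fy : (Fin n → ℝ) × ℝ → ℝ := fun q => fderiv ℝ f q (ey n) with hfy_def
  have hfco : Continuous f := hf.continuous
  have hfd : Differentiable ℝ f := hf.differentiable (by simp)
  have hfderiv_cont : Continuous (fderiv ℝ f) := hf.continuous_fderiv (by simp)
  have hfy_cont : Continuous fy := hfderiv_cont.clm_apply continuous_const
  have hgradSq_cont : Continuous (gradSq n f) := by
    apply Continuous.add
    · exact continuous_finset_sum _ fun i _ =>
        (hfderiv_cont.clm_apply continuous_const).pow 2
    · exact (hfderiv_cont.clm_apply continuous_const).pow 2
  have hg_cont : Continuous g := Real.continuous_sqrt.comp hgradSq_cont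
  have hg0 : ∀ q, 0 ≤ g q := fun q => Real.sqrt_nonneg _
  have hgradSq0 : ∀ q, 0 ≤ gradSq n f q := by
    intro q
    apply add_nonneg (Finset.sum_nonneg fun i _ => sq_nonneg _) (sq_nonneg _)
  have hfy_le : ∀ q, fy q ≤ g q := by
    intro q
    have h1 : (fy q) ^ 2 ≤ gradSq n f q := by
      have h2 : 0 ≤ ∑ i, (fderiv ℝ f q (ex n i)) ^ 2 :=
        Finset.sum_nonneg fun i _ => sq_nonneg _
      simp only [gradSq, pderiv', hfy_def]
      linarith
    calc fy q ≤ |fy q| := le_abs_self _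
      _ = Real.sqrt ((fy q) ^ 2) := (Real.sqrt_sq_eq_abs _).symm
      _ ≤ g q := Real.sqrt_le_sqrt h1
  -- the support is at height ≥ δ > 0
  obtain ⟨δ, hδ0, hδ⟩ : ∃ δ > (0:ℝ), ∀ q : (Fin n → ℝ) × ℝ, q.2 < δ → f q = 0 := by
    rcases (tsupport f).eq_empty_or_nonempty with he | hne
    · exact ⟨1, one_pos, fun q _ => image_eq_zero_of_notMem_tsupport (by simp [he])⟩
    · obtain ⟨q₀, hq₀K, hq₀min⟩ :=
        hfc.exists_isMinOn hne continuous_snd.continuousOn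
      refine ⟨q₀.2, hfH hq₀K, fun q hq => ?_⟩
      apply image_eq_zero_of_notMem_tsupport
      intro hq'
      exact absurd (hq₀min hq') (not_le.2 hq)
  have hlow : ∀ q : (Fin n → ℝ) × ℝ, q.2 < δ → f q = 0 ∧ fderiv ℝ f q = 0 := by
    intro q hq
    refine ⟨hδ q hq, ?_⟩
    have hev : f =ᶠ[nhds q] fun _ => 0 := by
      have : IsOpen {r : (Fin n → ℝ) × ℝ | r.2 < δ} := isOpen_lt continuous_snd continuous_const
      filter_upwards [this.mem_nhds hq] with r hr using hδ r hr
    rw [hev.fderiv_eq, fderiv_fun_const]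
    rfl
  have hnsupp : ∀ q, q ∉ tsupport f → f q = 0 ∧ fderiv ℝ f q = 0 := by
    intro q hq
    refine ⟨image_eq_zero_of_notMem_tsupport hq, ?_⟩
    by_contra h
    exact hq (support_fderiv_subset ℝ (Function.mem_support.2 h))
  have hgz : ∀ q, fderiv ℝ f q = 0 → g q = 0 := by
    intro q h
    rw [hg_def]
    simp [gradSq, pderiv', h]
  -- openness and measurability of H
  have hUopen : IsOpen (upperH n) := isOpen_lt continuous_const continuous_snd
  have hUmeas : MeasurableSet (upperH n) := hUopen.measurableSet
  -- gluing lemma for continuity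
  have glue : ∀ φ : (Fin n → ℝ) × ℝ → ℝ, ContinuousOn φ (upperH n) →
      (∀ q ∉ tsupport f, φ q = 0) → Continuous φ := by
    intro φ hcont h0
    rw [continuous_iff_continuousAt]
    intro q
    by_cases hq : q ∈ upperH n
    · exact hcont.continuousAt (hUopen.mem_nhds hq)
    · have hq' : q ∈ (tsupport f)ᶜ := fun h => hq (hfH h)
      have hev : φ =ᶠ[nhds q] fun _ => (0:ℝ) := by
        filter_upwards [(isClosed_tsupport f).isOpen_compl.mem_nhds hq'] with r hr
          using h0 r hr
      exact hev.continuousAt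
  -- continuity of rpow pieces
  have hycont : ∀ c : ℝ, ContinuousOn (fun q : (Fin n → ℝ) × ℝ => q.2 ^ c) (upperH n) := by
    intro c q hq
    exact ((Real.continuousAt_rpow_const _ _ (Or.inl (ne_of_gt hq))).comp
      continuous_snd.continuousAt).continuousWithinAt
  have hrpow_cont : ∀ (h : (Fin n → ℝ) × ℝ → ℝ) (c : ℝ), Continuous h → (∀ q, 0 ≤ h q) →
      0 < c → Continuous (fun q => h q ^ c) := by
    intro h c hc hpos hc0
    rw [continuous_iff_continuousAt]
    intro q
    exact (Real.continuousAt_rpow_const _ _ (Or.inr hc0.le)).comp hc.continuousAt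
  have hfp_cont : Continuous (fun q => f q ^ p) := hrpow_cont f p hfco hfpos hp0
  have hfp1_cont : Continuous (fun q => f q ^ (p-1)) := hrpow_cont f (p-1) hfco hfpos hp1
  have hgp_cont : Continuous (fun q => g q ^ p) := hrpow_cont g p hg_cont hg0 hp0
  -- the four integrands
  set φ1 : (Fin n → ℝ) × ℝ → ℝ := fun q => f q ^ p * q.2 ^ (-(n:ℝ) - 1) with hφ1_def
  set φ2 : (Fin n → ℝ) × ℝ → ℝ := fun q => p * f q ^ (p-1) * fy q * q.2 ^ (-(n:ℝ)) with hφ2_def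
  set φ3 : (Fin n → ℝ) × ℝ → ℝ := fun q => p * f q ^ (p-1) * g q * q.2 ^ (-(n:ℝ)) with hφ3_def
  set φ4 : (Fin n → ℝ) × ℝ → ℝ := fun q => g q ^ p * q.2 ^ (p - (n:ℝ) - 1) with hφ4_def
  set G : (Fin n → ℝ) × ℝ → ℝ := fun q => φ2 q - (n:ℝ) * φ1 q with hG_def
  have hfzero_pow : ∀ q, f q = 0 → f q ^ p = 0 ∧ f q ^ (p-1) = 0 := by
    intro q h
    rw [h]
    exact ⟨Real.zero_rpow (ne_of_gt hp0), Real.zero_rpow (ne_of_gt hp1)⟩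
  -- vanishing outside tsupport f
  have hφ1z : ∀ q, f q = 0 → φ1 q = 0 := fun q h => by
    rw [hφ1_def]; simp [(hfzero_pow q h).1]
  have hφ2z : ∀ q, f q = 0 → φ2 q = 0 := fun q h => by
    rw [hφ2_def]; simp [(hfzero_pow q h).2]
  have hφ3z : ∀ q, f q = 0 → φ3 q = 0 := fun q h => by
    rw [hφ3_def]; simp [(hfzero_pow q h).2]
  have hφ4z : ∀ q, fderiv ℝ f q = 0 → φ4 q = 0 := fun q h => by
    rw [hφ4_def]; simp [hgz q h, Real.zero_rpow (ne_of_gt hp0)]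
  have hGz : ∀ q, q ∉ tsupport f → G q = 0 := by
    intro q hq
    rw [hG_def]
    simp [hφ1z q (hnsupp q hq).1, hφ2z q (hnsupp q hq).1]
  -- continuity and integrability of the integrands
  have hφ1_cont : Continuous φ1 :=
    glue φ1 (hfp_cont.continuousOn.mul (hycont _)) (fun q hq => hφ1z q (hnsupp q hq).1)
  have hφ2_cont : Continuous φ2 :=
    glue φ2 ((((continuous_const.mul hfp1_cont).mul hfy_cont).continuousOn).mul (hycont _))
      (fun q hq => hφ2z q (hnsupp q hq).1)
  have hφ3_cont : Continuous φ3 :=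
    glue φ3 ((((continuous_const.mul hfp1_cont).mul hg_cont).continuousOn).mul (hycont _))
      (fun q hq => hφ3z q (hnsupp q hq).1)
  have hφ4_cont : Continuous φ4 :=
    glue φ4 (hgp_cont.continuousOn.mul (hycont _)) (fun q hq => hφ4z q (hnsupp q hq).2)
  have hG_cont : Continuous G := hφ2_cont.sub (continuous_const.mul hφ1_cont)
  have hsupp : ∀ φ : (Fin n → ℝ) × ℝ → ℝ, (∀ q, q ∉ tsupport f → φ q = 0) →
      HasCompactSupport φ := fun φ h => HasCompactSupport.intro hfc h
  have hφ1_int : Integrable φ1 := hφ1_cont.integrable_of_hasCompactSupport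
    (hsupp φ1 fun q hq => hφ1z q (hnsupp q hq).1)
  have hφ2_int : Integrable φ2 := hφ2_cont.integrable_of_hasCompactSupport
    (hsupp φ2 fun q hq => hφ2z q (hnsupp q hq).1)
  have hφ3_int : Integrable φ3 := hφ3_cont.integrable_of_hasCompactSupport
    (hsupp φ3 fun q hq => hφ3z q (hnsupp q hq).1)
  have hφ4_int : Integrable φ4 := hφ4_cont.integrable_of_hasCompactSupport
    (hsupp φ4 fun q hq => hφ4z q (hnsupp q hq).2)
  have hG_int : Integrable G := hφ2_int.sub (hφ1_int.const_mul _)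
  -- STEP 1 : integration by parts, ∫ G = 0
  have hinner : ∀ x : Fin n → ℝ, (∫ y : ℝ, G (x, y)) = 0 := by
    intro x
    set a : ℝ := δ / 2 with ha_def
    have ha0 : 0 < a := by positivity
    have haδ : a < δ := by rw [ha_def]; linarith
    have hGx_cont : Continuous (fun y : ℝ => G (x, y)) :=
      hG_cont.comp (continuous_const.prodMk continuous_id)
    have hGx_supp : HasCompactSupport (fun y : ℝ => G (x, y)) := by
      apply HasCompactSupport.intro (hfc.image continuous_snd)
      intro y hy
      exact hGz _ (fun hmem => hy ⟨(x, y), hmem, rfl⟩)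
    have hGx_int : Integrable (fun y : ℝ => G (x, y)) :=
      hGx_cont.integrable_of_hasCompactSupport hGx_supp
    have hGlow : ∀ y : ℝ, y < δ → G (x, y) = 0 := by
      intro y hy
      rw [hG_def]
      simp [hφ1z _ (hlow (x,y) hy).1, hφ2z _ (hlow (x,y) hy).1]
    rw [← setIntegral_eq_integral_of_forall_compl_eq_zero
      (s := Set.Ioi a) (fun y hy => hGlow y (lt_of_le_of_lt (by simpa using hy) haδ))]
    set F : ℝ → ℝ := fun y => f (x, y) ^ p * y ^ (-(n:ℝ)) with hF_def
    have hFa : F a = 0 := by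
      rw [hF_def]
      simp [(hfzero_pow (x,a) (hδ (x,a) haδ)).1]
    have hFcont : ContinuousWithinAt F (Set.Ici a) a := by
      apply ContinuousAt.continuousWithinAt
      apply ContinuousAt.mul
      · exact (Real.continuousAt_rpow_const _ _ (Or.inr hp0.le)).comp
          (hfco.comp (continuous_const.prodMk continuous_id)).continuousAt
      · exact Real.continuousAt_rpow_const _ _ (Or.inl (ne_of_gt ha0))
    have hFd : ∀ y ∈ Set.Ioi a, HasDerivAt F (G (x, y)) y := by
      intro y hy
      have hy0 : 0 < y := lt_trans ha0 hy
      have hcurve : HasDerivAt (fun y : ℝ => ((x, y) : (Fin n → ℝ) × ℝ)) (ey n) y := by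
        have := (hasDerivAt_const y x).prodMk (hasDerivAt_id y)
        exact this
      have hyd : HasDerivAt (fun y : ℝ => f (x, y)) (fy (x, y)) y :=
        (hfd (x, y)).hasFDerivAt.comp_hasDerivAt y hcurve
      have h1 : HasDerivAt (fun y : ℝ => f (x, y) ^ p)
          (p * f (x, y) ^ (p - 1) * fy (x, y)) y := by
        have := (Real.hasDerivAt_rpow_const (p := p)
          (x := f (x, y)) (Or.inr hp.le)).comp y hyd
        exact this
      have h2 : HasDerivAt (fun y : ℝ => y ^ (-(n:ℝ))) (-(n:ℝ) * y ^ (-(n:ℝ) - 1)) y :=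
        Real.hasDerivAt_rpow_const (Or.inl (ne_of_gt hy0))
      have := h1.mul h2
      refine this.congr_deriv ?_
      rw [hG_def, hφ1_def, hφ2_def]
      ring
    have hFtend : Filter.Tendsto F Filter.atTop (nhds 0) := by
      obtain ⟨R, hR⟩ := (hfc.image continuous_snd).bddAbove
      have hev : (fun _ : ℝ => (0:ℝ)) =ᶠ[Filter.atTop] F := by
        filter_upwards [Filter.eventually_gt_atTop R] with y hy
        have hfz : f (x, y) = 0 := by
          by_contra h
          exact absurd (hR ⟨(x, y), subset_tsupport f h, rfl⟩) (not_le.2 hy)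
        rw [hF_def]
        simp [(hfzero_pow (x,y) hfz).1]
      exact Filter.Tendsto.congr' hev tendsto_const_nhds
    rw [integral_Ioi_of_hasDerivAt_of_tendsto hFcont hFd hGx_int.integrableOn hFtend, hFa,
      sub_zero]
  have hG_zero : (∫ q, G q) = 0 := by
    rw [Measure.volume_eq_prod, integral_prod _ (by rwa [← Measure.volume_eq_prod])]
    simp [hinner]
  have hG_H : (∫ q in upperH n, G q) = 0 := by
    rw [setIntegral_eq_integral_of_forall_compl_eq_zero (fun q hq => ?_), hG_zero]
    have : q.2 < δ := lt_of_le_of_lt (not_lt.1 hq) hδ0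
    rw [hG_def]
    simp [hφ1z _ (hlow q this).1, hφ2z _ (hlow q this).1]
  have key1 : (n:ℝ) * ∫ q in upperH n, φ1 q = ∫ q in upperH n, φ2 q := by
    simp only [hG_def] at hG_H
    rw [integral_sub hφ2_int.integrableOn ((hφ1_int.const_mul _).integrableOn),
      integral_const_mul] at hG_H
    linarith
  -- STEP 2 : |∂_y f| ≤ |∇f|
  have key2 : (∫ q in upperH n, φ2 q) ≤ ∫ q in upperH n, φ3 q := by
    apply setIntegral_mono_on hφ2_int.integrableOn hφ3_int.integrableOn hUmeas
    intro q hq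
    have hq2 : (0:ℝ) < q.2 := hq
    have h1 : 0 ≤ p * f q ^ (p-1) := mul_nonneg hp0.le (Real.rpow_nonneg (hfpos q) _)
    have h2 : 0 ≤ q.2 ^ (-(n:ℝ)) := Real.rpow_nonneg hq2.le _
    exact mul_le_mul_of_nonneg_right (mul_le_mul_of_nonneg_left (hfy_le q) h1) h2
  -- STEP 3 : pointwise Young inequality
  have key3 : (∫ q in upperH n, φ3 q) ≤
      (p-1) * ((n:ℝ)/p) * (∫ q in upperH n, φ1 q) +
        (p/(n:ℝ)) ^ (p-1) * ∫ q in upperH n, φ4 q := by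
    calc (∫ q in upperH n, φ3 q)
        ≤ ∫ q in upperH n,
            ((p-1) * ((n:ℝ)/p) * φ1 q + (p/(n:ℝ)) ^ (p-1) * φ4 q) := by
          apply setIntegral_mono_on hφ3_int.integrableOn
            (((hφ1_int.const_mul ((p-1) * ((n:ℝ)/p))).add
              (hφ4_int.const_mul ((p/(n:ℝ)) ^ (p-1)))).integrableOn) hUmeas
          intro q hq
          have hq2 : (0:ℝ) < q.2 := hq
          exact young_aux p (n:ℝ) (f q) (g q) q.2 hp hn0 (hfpos q) (hg0 q) hq2
      _ = (p-1) * ((n:ℝ)/p) * (∫ q in upperH n, φ1 q) +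
            (p/(n:ℝ)) ^ (p-1) * ∫ q in upperH n, φ4 q := by
          rw [integral_add ((hφ1_int.const_mul _).integrableOn)
            ((hφ4_int.const_mul _).integrableOn), integral_const_mul, integral_const_mul]
  -- conclusion
  set A : ℝ := ∫ q in upperH n, φ1 q with hA_def
  set B : ℝ := ∫ q in upperH n, φ4 q with hB_def
  have hchain : (n:ℝ) * A ≤ (p-1) * ((n:ℝ)/p) * A + (p/(n:ℝ)) ^ (p-1) * B := by
    rw [key1]; exact le_trans key2 key3
  have hid : (n:ℝ) * A - (p-1) * ((n:ℝ)/p) * A = ((n:ℝ)/p) * A := by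
    field_simp
    ring
  have hcB : ((n:ℝ)/p) * A ≤ (p/(n:ℝ)) ^ (p-1) * B := by linarith
  have hnp0 : (0:ℝ) < (n:ℝ)/p := div_pos hn0 hp0
  have hk0 : (0:ℝ) < ((n:ℝ)/p) ^ (p-1) := Real.rpow_pos_of_pos hnp0 _
  have hmul := mul_le_mul_of_nonneg_left hcB hk0.le
  have e1 : ((n:ℝ)/p) ^ (p-1) * (((n:ℝ)/p) * A) = ((n:ℝ)/p) ^ p * A := by
    have h : ((n:ℝ)/p) ^ p = ((n:ℝ)/p) ^ (p-1) * ((n:ℝ)/p) := by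
      rw [← Real.rpow_add_one (ne_of_gt hnp0) (p-1)]
      norm_num
    rw [h]; ring
  have e2 : ((n:ℝ)/p) ^ (p-1) * ((p/(n:ℝ)) ^ (p-1) * B) = B := by
    rw [← mul_assoc, ← Real.mul_rpow hnp0.le (by positivity),
      show ((n:ℝ)/p) * (p/(n:ℝ)) = 1 by field_simp, Real.one_rpow, one_mul]
  linarith
end

section
/- Let n ≥ 1 and define the hyperbolic Laplacian L on functions on H = ℝ^n × (0, ∞) by (Lf)(x,y) = y²·(Δf)(x,y) − (n−1)·y·(∂_y f)(x,y). Then for every natural number m ≥ 1 and every smooth f : ℝ^n × ℝ → ℝ with compact support contained in H, one has ∫_H (L^m f)(x,y)² · y^{−n−1} dx dy ≥ (n/2)^{4m} · ∫_H f(x,y)² · y^{−n−1} dx dy. -/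
set_option maxHeartbeats 2000000


open MeasureTheory

noncomputable section Helpers

open Set Metric

variable {n : ℕ}

abbrev EE (n : ℕ) := (Fin n → ℝ) × ℝ

instance : (volume : Measure (EE n)).IsAddLeftInvariant :=
  (inferInstance : ((volume : Measure (Fin n → ℝ)).prod (volume : Measure ℝ)).IsAddLeftInvariant)

lemma integral_fderiv_apply_eq_zero (g : EE n → ℝ) (hg : ContDiff ℝ 1 g)
    (hgc : HasCompactSupport g) (v : EE n) : ∫ p, fderiv ℝ g p v = 0 := by
  obtain ⟨M, hM⟩ : ∃ M, ∀ p, ‖fderiv ℝ g p‖ ≤ M := by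
    rcases (hgc.fderiv ℝ).exists_bound_of_continuous (hg.continuous_fderiv one_ne_zero) with ⟨M, hM⟩
    exact ⟨M, hM⟩
  set K : Set (EE n) := cthickening ‖v‖ (tsupport g) with hK
  set bound : EE n → ℝ := K.indicator (fun _ => M * ‖v‖) with hbound
  have key := hasDerivAt_integral_of_dominated_loc_of_deriv_le (μ := volume)
    (F := fun (t : ℝ) (p : EE n) => g (p + t • v))
    (F' := fun (t : ℝ) (p : EE n) => fderiv ℝ g (p + t • v) v)
    (x₀ := (0:ℝ)) (bound := bound) (s := Metric.ball 0 1) (Metric.ball_mem_nhds _ one_pos)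
    ?_ ?_ ?_ ?_ ?_ ?_
  · obtain ⟨hint, hder⟩ := key
    have hconst : ∀ t : ℝ, (∫ p, g (p + t • v)) = ∫ p, g p := fun t =>
      integral_add_right_eq_self g (t • v)
    have hder0 : HasDerivAt (fun _ : ℝ => ∫ p, g p) (∫ p, fderiv ℝ g (p + (0:ℝ) • v) v) 0 :=
      hder.congr_of_eventuallyEq (Filter.Eventually.of_forall fun t => (hconst t).symm)
    have h0 : (∫ p, fderiv ℝ g (p + (0:ℝ) • v) v) = 0 := hder0.unique (hasDerivAt_const _ _)
    simpa using h0
  · exact Filter.Eventually.of_forall fun t =>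
      ((hg.continuous.comp (by fun_prop : Continuous fun p : EE n => p + t • v))).aestronglyMeasurable
  · simp only [zero_smul, add_zero]
    exact hg.continuous.integrable_of_hasCompactSupport hgc
  · exact (((hg.continuous_fderiv one_ne_zero).comp (by fun_prop :
      Continuous fun p : EE n => p + (0:ℝ) • v)).clm_apply continuous_const).aestronglyMeasurable
  · refine Filter.Eventually.of_forall fun p => fun t ht => ?_
    by_cases hp : p ∈ K
    · rw [hbound, indicator_of_mem hp]
      calc ‖fderiv ℝ g (p + t • v) v‖ ≤ ‖fderiv ℝ g (p + t • v)‖ * ‖v‖ :=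
            (fderiv ℝ g (p + t • v)).le_opNorm v
        _ ≤ M * ‖v‖ := by
            have h1 := hM (p + t • v)
            have hv : (0:ℝ) ≤ ‖v‖ := norm_nonneg v
            nlinarith [norm_nonneg (fderiv ℝ g (p + t • v))]
    · rw [hbound, indicator_of_notMem hp]
      have hts : p + t • v ∉ tsupport g := by
        intro hmem
        refine hp ?_
        rw [hK]
        refine mem_cthickening_of_dist_le p (p + t • v) _ _ hmem ?_
        rw [dist_self_add_right, norm_smul, Real.norm_eq_abs]
        calc |t| * ‖v‖ ≤ 1 * ‖v‖ := by
              refine mul_le_mul_of_nonneg_right ?_ (norm_nonneg v)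
              simpa [Real.dist_eq] using le_of_lt (mem_ball.mp ht)
          _ = ‖v‖ := one_mul _
      have hz : fderiv ℝ g (p + t • v) = 0 := by
        by_contra hne
        exact hts (support_fderiv_subset ℝ (Function.mem_support.mpr hne))
      simp [hz]
  · have hKm : MeasurableSet K := isClosed_cthickening.measurableSet
    exact (integrable_indicator_iff hKm).mpr
      (integrableOn_const hgc.cthickening.measure_lt_top.ne)
  · refine Filter.Eventually.of_forall fun p t ht => ?_
    exact ((hg.differentiable one_ne_zero (p + t • v)).hasFDerivAt).comp_hasDerivAt t
      (by simpa using ((hasDerivAt_id t).smul_const v).const_add p)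

lemma contDiff_pderiv {f : EE n → ℝ} (hf : ContDiff ℝ (⊤ : ℕ∞) f) (v : EE n) :
    ContDiff ℝ (⊤ : ℕ∞) (pderiv' n v f) :=
  (hf.fderiv_right (by simp)).clm_apply contDiff_const

lemma support_pderiv_subset {f : EE n → ℝ} (v : EE n) :
    Function.support (pderiv' n v f) ⊆ tsupport f := by
  intro p hp
  have : fderiv ℝ f p ≠ 0 := by
    intro h; apply hp; simp [pderiv', h]
  exact support_fderiv_subset ℝ (Function.mem_support.mpr this)

lemma tsupport_pderiv_subset {f : EE n → ℝ} (v : EE n) :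
    tsupport (pderiv' n v f) ⊆ tsupport f :=
  closure_minimal (support_pderiv_subset v) isClosed_closure

lemma contDiff_hypLap {f : EE n → ℝ} (hf : ContDiff ℝ (⊤ : ℕ∞) f) :
    ContDiff ℝ (⊤ : ℕ∞) (hypLap n f) := by
  unfold hypLap eucLap
  refine ContDiff.sub (ContDiff.mul ?_ ?_) (ContDiff.mul (ContDiff.mul contDiff_const ?_) ?_)
  · exact (contDiff_snd).pow 2
  · exact ContDiff.add
      (ContDiff.sum fun i _ => contDiff_pderiv (contDiff_pderiv hf _) _)
      (contDiff_pderiv (contDiff_pderiv hf _) _)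
  · exact contDiff_snd
  · exact contDiff_pderiv hf _

lemma support_hypLap_subset {f : EE n → ℝ} :
    Function.support (hypLap n f) ⊆ tsupport f := by
  intro p hp
  by_contra hmem
  apply hp
  have h1 : ∀ v w : EE n, pderiv' n v (pderiv' n w f) p = 0 := fun v w => by
    have : p ∉ tsupport (pderiv' n w f) := fun h => hmem (tsupport_pderiv_subset w h)
    have : p ∉ Function.support (pderiv' n v (pderiv' n w f)) :=
      fun h => this (support_pderiv_subset (f := pderiv' n w f) v h)
    simpa [Function.mem_support, not_not] using this
  have h2 : pderiv' n (ey n) f p = 0 := by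
    have : p ∉ Function.support (pderiv' n (ey n) f) := fun h => hmem (support_pderiv_subset _ h)
    simpa [Function.mem_support, not_not] using this
  simp [hypLap, eucLap, h1, h2]

lemma hasCompactSupport_hypLap {f : EE n → ℝ} (hfc : HasCompactSupport f) :
    HasCompactSupport (hypLap n f) :=
  hfc.mono' support_hypLap_subset

-- derivative rules
lemma pderiv_mul {A B : EE n → ℝ} {p : EE n} (hA : DifferentiableAt ℝ A p)
    (hB : DifferentiableAt ℝ B p) (v : EE n) :
    pderiv' n v (fun q => A q * B q) p = pderiv' n v A p * B p + A p * pderiv' n v B p := by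
  simp only [pderiv', fderiv_fun_mul hA hB]
  simp only [ContinuousLinearMap.add_apply, ContinuousLinearMap.smul_apply, smul_eq_mul]
  ring

lemma pderiv_neg {A : EE n → ℝ} {p : EE n} (v : EE n) :
    pderiv' n v (fun q => -A q) p = -pderiv' n v A p := by
  simp [pderiv', fderiv_neg]

lemma pderiv_add {A B : EE n → ℝ} {p : EE n} (hA : DifferentiableAt ℝ A p)
    (hB : DifferentiableAt ℝ B p) (v : EE n) :
    pderiv' n v (fun q => A q + B q) p = pderiv' n v A p + pderiv' n v B p := by
  simp [pderiv', fderiv_fun_add hA hB]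

lemma pderiv_const_mul {A : EE n → ℝ} {p : EE n} (hA : DifferentiableAt ℝ A p) (c : ℝ) (v : EE n) :
    pderiv' n v (fun q => c * A q) p = c * pderiv' n v A p := by
  simp [pderiv', fderiv_const_mul hA c]

lemma hasFDerivAt_rpow_snd {p : EE n} (hp : 0 < p.2) (r : ℝ) :
    HasFDerivAt (fun q : EE n => q.2 ^ r)
      ((r * p.2 ^ (r - 1)) • (ContinuousLinearMap.snd ℝ (Fin n → ℝ) ℝ)) p :=
  (Real.hasDerivAt_rpow_const (Or.inl hp.ne')).comp_hasFDerivAt p (hasFDerivAt_snd)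

lemma differentiableAt_rpow_snd {p : EE n} (hp : 0 < p.2) (r : ℝ) :
    DifferentiableAt ℝ (fun q : EE n => q.2 ^ r) p :=
  (hasFDerivAt_rpow_snd hp r).differentiableAt

lemma pderiv_rpow_snd {p : EE n} (hp : 0 < p.2) (r : ℝ) (v : EE n) :
    pderiv' n v (fun q : EE n => q.2 ^ r) p = r * p.2 ^ (r - 1) * v.2 := by
  simp only [pderiv', (hasFDerivAt_rpow_snd hp r).fderiv]
  simp [mul_comm]

lemma pderiv_mul_rpow {A : EE n → ℝ} {p : EE n} (hA : DifferentiableAt ℝ A p)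
    (hp : 0 < p.2) (r : ℝ) (v : EE n) :
    pderiv' n v (fun q => A q * q.2 ^ r) p
      = pderiv' n v A p * p.2 ^ r + A p * (r * p.2 ^ (r - 1) * v.2) := by
  rw [pderiv_mul hA (differentiableAt_rpow_snd hp r) v, pderiv_rpow_snd hp r v]

@[simp] lemma ex_snd (i : Fin n) : (ex n i).2 = 0 := rfl
@[simp] lemma ey_snd : (ey n).2 = 1 := rfl

def Vi (f : EE n → ℝ) (i : Fin n) : EE n → ℝ := fun q =>
  -(f q * pderiv' n (ex n i) f q) * q.2 ^ ((1:ℝ) - n)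

def Vy (f : EE n → ℝ) : EE n → ℝ := fun q =>
  -(f q * pderiv' n (ey n) f q) * q.2 ^ ((1:ℝ) - n)
    + ((n:ℝ)/2) * (f q * f q) * q.2 ^ (-(n:ℝ))

def Rf (f : EE n → ℝ) : EE n → ℝ := fun p =>
  (∑ i, (pderiv' n (ex n i) f p)^2 * p.2 ^ ((1:ℝ) - n))
    + (pderiv' n (ey n) f p * p.2 ^ (((1:ℝ) - n)/2)
        - ((n:ℝ)/2) * f p * p.2 ^ ((-(n:ℝ) - 1)/2))^2

lemma key_pointwise {f : EE n → ℝ} (hf : ContDiff ℝ (⊤ : ℕ∞) f) (p : EE n) (hp : 0 < p.2) :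
    -(hypLap n f p * f p * p.2 ^ (-(n:ℝ) - 1))
      = ((n:ℝ)/2)^2 * (f p ^ 2 * p.2 ^ (-(n:ℝ) - 1))
        + ((∑ i, pderiv' n (ex n i) (Vi f i) p) + pderiv' n (ey n) (Vy f) p)
        + Rf f p := by
  have hdf : ∀ q, DifferentiableAt ℝ f q := fun q => hf.differentiable (by simp) q
  have hdg : ∀ v q, DifferentiableAt ℝ (pderiv' n v f) q := fun v q =>
    (contDiff_pderiv hf v).differentiable (by simp) q
  have step1 : ∀ i : Fin n, pderiv' n (ex n i) (Vi f i) p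
      = -(p.2 ^ ((1:ℝ) - n)) * (pderiv' n (ex n i) f p)^2
        + (-(f p * p.2 ^ ((1:ℝ) - n))) * pderiv' n (ex n i) (pderiv' n (ex n i) f) p := by
    intro i
    unfold Vi
    rw [pderiv_mul_rpow (((hdf p).fun_mul (hdg _ p)).fun_neg) hp _ _]
    rw [show (fun q => -(f q * pderiv' n (ex n i) f q)) = (fun q =>
      -((fun q => f q * pderiv' n (ex n i) f q) q)) from rfl, pderiv_neg,
      pderiv_mul (hdf p) (hdg _ p)]
    simp only [ex_snd, mul_zero]
    ring
  have hsum : (∑ i, pderiv' n (ex n i) (Vi f i) p)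
      = -(p.2 ^ ((1:ℝ) - n)) * (∑ i, (pderiv' n (ex n i) f p)^2)
        + (-(f p * p.2 ^ ((1:ℝ) - n)))
          * (∑ i, pderiv' n (ex n i) (pderiv' n (ex n i) f) p) := by
    rw [Finset.sum_congr rfl fun i _ => step1 i, Finset.sum_add_distrib,
      ← Finset.mul_sum, ← Finset.mul_sum]
  have step2 : pderiv' n (ey n) (Vy f) p
      = (-(pderiv' n (ey n) f p * pderiv' n (ey n) f p
            + f p * pderiv' n (ey n) (pderiv' n (ey n) f) p)) * p.2 ^ ((1:ℝ) - n)
        + (-(f p * pderiv' n (ey n) f p)) * (((1:ℝ) - n) * p.2 ^ ((1:ℝ) - n - 1) * 1)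
        + (((n:ℝ)/2) * (pderiv' n (ey n) f p * f p + f p * pderiv' n (ey n) f p))
            * p.2 ^ (-(n:ℝ))
        + (((n:ℝ)/2) * (f p * f p)) * ((-(n:ℝ)) * p.2 ^ (-(n:ℝ) - 1) * 1) := by
    unfold Vy
    rw [pderiv_add (((((hdf p).fun_mul (hdg _ p)).fun_neg).fun_mul
        (differentiableAt_rpow_snd hp _)))
      ((((hdf p).fun_mul (hdf p)).const_mul _).fun_mul (differentiableAt_rpow_snd hp _)) _]
    rw [pderiv_mul_rpow (((hdf p).fun_mul (hdg _ p)).fun_neg) hp _ _,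
      pderiv_mul_rpow (((hdf p).fun_mul (hdf p)).const_mul _) hp _ _]
    rw [show (fun q => -(f q * pderiv' n (ey n) f q)) = (fun q =>
      -((fun q => f q * pderiv' n (ey n) f q) q)) from rfl, pderiv_neg,
      pderiv_mul (hdf p) (hdg _ p),
      pderiv_const_mul ((hdf p).fun_mul (hdf p)) _, pderiv_mul (hdf p) (hdf p)]
    simp only [ey_snd]
    ring
  rw [hsum, step2]
  unfold hypLap eucLap Rf
  rw [← Finset.sum_mul]
  set a := p.2 ^ ((-(n:ℝ) - 1)/2) with ha
  have hyadd : ∀ u v : ℝ, p.2 ^ (u + v) = p.2 ^ u * p.2 ^ v := fun u v => Real.rpow_add hp u v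
  have h1 : p.2 ^ (-(n:ℝ) - 1) = a * a := by
    rw [show -(n:ℝ) - 1 = (-(n:ℝ)-1)/2 + (-(n:ℝ)-1)/2 by ring, hyadd]
  have h2 : p.2 ^ (-(n:ℝ)) = a * a * p.2 := by
    rw [show -(n:ℝ) = (-(n:ℝ)-1)/2 + ((-(n:ℝ)-1)/2 + 1) by ring, hyadd, hyadd, Real.rpow_one]
    ring
  have h3 : p.2 ^ ((1:ℝ) - n) = a * a * (p.2 * p.2) := by
    rw [show (1:ℝ) - n = (-(n:ℝ)-1)/2 + ((-(n:ℝ)-1)/2 + (1 + 1)) by ring, hyadd, hyadd,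
      hyadd, Real.rpow_one]
    ring
  have h4 : p.2 ^ (((1:ℝ) - n)/2) = a * p.2 := by
    rw [show ((1:ℝ) - n)/2 = (-(n:ℝ)-1)/2 + 1 by ring, hyadd, Real.rpow_one]
  have h5 : p.2 ^ ((1:ℝ) - n - 1) = a * a * p.2 := by
    rw [show (1:ℝ) - n - 1 = -(n:ℝ) by ring]; exact h2
  rw [h1, h2, h3, h4, h5]
  ring

lemma isOpen_upperH : IsOpen (upperH n) := isOpen_Ioi.preimage continuous_snd

lemma measurableSet_upperH : MeasurableSet (upperH n) := isOpen_upperH.measurableSet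

/-- separation of the support from the boundary -/
lemma exists_delta {f : EE n → ℝ} (hfc : HasCompactSupport f) (hfH : tsupport f ⊆ upperH n) :
    ∃ δ : ℝ, 0 < δ ∧ ∀ q : EE n, q.2 < δ → q ∉ tsupport f := by
  rcases eq_empty_or_nonempty (tsupport f) with h | h
  · exact ⟨1, one_pos, fun q _ hq => by rw [h] at hq; exact hq⟩
  · obtain ⟨q₀, hq₀K, hq₀min⟩ := hfc.exists_isMinOn h continuous_snd.continuousOn
    refine ⟨q₀.2, hfH hq₀K, fun q hq hqK => ?_⟩
    exact absurd (hq₀min hqK) (by simpa using hq)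
  -- note : `hfc.exists_isMinOn` might not exist; fallback below

/-- globalization: continuity, integrability, set integral = full integral -/
lemma globalize {δ : ℝ} (hδ : 0 < δ) {K : Set (EE n)} (hK : IsCompact K)
    (G : EE n → ℝ) (h0 : ∀ q : EE n, q.2 < δ → G q = 0)
    (hcont : ∀ q : EE n, 0 < q.2 → ContinuousAt G q)
    (hsupp : Function.support G ⊆ K) :
    Integrable G ∧ (∫ q in upperH n, G q) = ∫ q, G q := by
  have hGc : Continuous G := by
    rw [continuous_iff_continuousAt]
    intro q
    rcases lt_or_ge 0 q.2 with hq | hq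
    · exact hcont q hq
    · have hopen : IsOpen {p : EE n | p.2 < δ} := isOpen_Iio.preimage continuous_snd
      have hmem : q ∈ {p : EE n | p.2 < δ} := lt_of_le_of_lt hq hδ
      have : G =ᶠ[nhds q] (fun _ => 0) :=
        Filter.eventuallyEq_of_mem (hopen.mem_nhds hmem) (fun p hp => h0 p hp)
      exact (continuousAt_const).congr this.symm
  have hGsupp : HasCompactSupport G := HasCompactSupport.of_support_subset_isCompact hK hsupp
  have hInt : Integrable G := hGc.integrable_of_hasCompactSupport hGsupp
  refine ⟨hInt, setIntegral_eq_integral_of_forall_compl_eq_zero fun q hq => ?_⟩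
  have : q.2 ≤ 0 := not_lt.mp hq
  exact h0 q (lt_of_le_of_lt this hδ)

/-- smoothness and compact support of `A * rpow` factors -/
lemma smooth_mul_rpow {δ : ℝ} (hδ : 0 < δ) {A : EE n → ℝ} (hA : ContDiff ℝ (⊤ : ℕ∞) A)
    (h0 : ∀ q : EE n, q.2 < δ → A q = 0) (r : ℝ) :
    ContDiff ℝ (⊤ : ℕ∞) (fun q : EE n => A q * q.2 ^ r) := by
  rw [contDiff_iff_contDiffAt]
  intro q
  rcases lt_or_ge 0 q.2 with hq | hq
  · exact (hA.contDiffAt).mul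
      (((Real.contDiffAt_rpow_const_of_ne hq.ne')).comp q contDiff_snd.contDiffAt)
  · have hopen : IsOpen {p : EE n | p.2 < δ} := isOpen_Iio.preimage continuous_snd
    have hmem : q ∈ {p : EE n | p.2 < δ} := lt_of_le_of_lt hq hδ
    have heq : (fun q : EE n => A q * q.2 ^ r) =ᶠ[nhds q] (fun _ => 0) :=
      Filter.eventuallyEq_of_mem (hopen.mem_nhds hmem)
        (fun p hp => by simp [h0 p hp])
    exact (contDiffAt_const (c := 0)).congr_of_eventuallyEq heq

lemma key_ineq {f : EE n → ℝ} (hf : ContDiff ℝ (⊤ : ℕ∞) f) (hfc : HasCompactSupport f)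
    (hfH : tsupport f ⊆ upperH n) :
    ((n:ℝ)/2)^4 * ∫ q in upperH n, f q ^ 2 * q.2 ^ (-(n:ℝ) - 1)
      ≤ ∫ q in upperH n, (hypLap n f q) ^ 2 * q.2 ^ (-(n:ℝ) - 1) := by
  obtain ⟨δ, hδ, hδf⟩ := exists_delta hfc hfH
  have hf0 : ∀ q : EE n, q.2 < δ → f q = 0 := fun q hq =>
    image_eq_zero_of_notMem_tsupport (hδf q hq)
  have hg0 : ∀ (v : EE n) (q : EE n), q.2 < δ → pderiv' n v f q = 0 := fun v q hq =>
    Function.notMem_support.mp (fun h => hδf q hq (support_pderiv_subset v h))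
  have hL0 : ∀ q : EE n, q.2 < δ → hypLap n f q = 0 := fun q hq =>
    Function.notMem_support.mp (fun h => hδf q hq (support_hypLap_subset h))
  have hcf : Continuous f := hf.continuous
  have hcg : ∀ v : EE n, Continuous (pderiv' n v f) := fun v => (contDiff_pderiv hf v).continuous
  have hcL : Continuous (hypLap n f) := (contDiff_hypLap hf).continuous
  have hcrpow : ∀ (r : ℝ) (q : EE n), 0 < q.2 → ContinuousAt (fun q : EE n => q.2 ^ r) q :=
    fun r q hq => ContinuousAt.comp
      (Real.continuousAt_rpow_const _ _ (Or.inl hq.ne')) continuousAt_snd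
  set t : ℝ := ((n:ℝ)/2)^2 with ht
  have htpos : 0 ≤ t := sq_nonneg _
  -- integrands
  set G1 : EE n → ℝ := fun q => f q ^ 2 * q.2 ^ (-(n:ℝ) - 1) with hG1
  set G2 : EE n → ℝ := fun q => (hypLap n f q) ^ 2 * q.2 ^ (-(n:ℝ) - 1) with hG2
  set G3 : EE n → ℝ := fun q => hypLap n f q * f q * q.2 ^ (-(n:ℝ) - 1) with hG3
  set G5 : EE n → ℝ := fun q => (hypLap n f q + t * f q) ^ 2 * q.2 ^ (-(n:ℝ) - 1) with hG5
  -- globalizations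
  have hI1 := globalize hδ hfc G1 (fun q hq => by simp [hG1, hf0 q hq])
    (fun q hq => ((hcf.continuousAt.pow 2).mul (hcrpow _ q hq)))
    (fun q hq => by
      simp only [Function.mem_support, hG1] at hq
      by_contra h
      exact hq (by simp [image_eq_zero_of_notMem_tsupport h]))
  have hI2 := globalize hδ hfc G2 (fun q hq => by simp [hG2, hL0 q hq])
    (fun q hq => ((hcL.continuousAt.pow 2).mul (hcrpow _ q hq)))
    (fun q hq => by
      simp only [Function.mem_support, hG2] at hq
      by_contra h
      have : hypLap n f q = 0 :=
        Function.notMem_support.mp (fun hs => h (support_hypLap_subset hs))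
      exact hq (by simp [this]))
  have hI3 := globalize hδ hfc G3 (fun q hq => by simp [hG3, hf0 q hq])
    (fun q hq => ((hcL.continuousAt.mul hcf.continuousAt).mul (hcrpow _ q hq)))
    (fun q hq => by
      simp only [Function.mem_support, hG3] at hq
      by_contra h
      exact hq (by simp [image_eq_zero_of_notMem_tsupport h]))
  have hI5 := globalize hδ hfc G5 (fun q hq => by simp [hG5, hf0 q hq, hL0 q hq])
    (fun q hq => (((hcL.continuousAt.add (continuousAt_const.mul hcf.continuousAt)).pow 2).mul
      (hcrpow _ q hq)))
    (fun q hq => by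
      simp only [Function.mem_support, hG5] at hq
      by_contra h
      have h1 : hypLap n f q = 0 :=
        Function.notMem_support.mp (fun hs => h (support_hypLap_subset hs))
      exact hq (by simp [h1, image_eq_zero_of_notMem_tsupport h]))
  have hI4 := globalize hδ hfc (Rf f)
    (fun q hq => by
      simp [Rf, hg0 _ q hq, hf0 q hq])
    (fun q hq => by
      refine ContinuousAt.add ?_ ?_
      · exact tendsto_finset_sum _ fun i _ =>
          ((hcg _).continuousAt.pow 2).mul (hcrpow _ q hq)
      · exact (((hcg _).continuousAt.mul (hcrpow _ q hq)).sub
          ((continuousAt_const.mul hcf.continuousAt).mul (hcrpow _ q hq))).pow 2)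
    (fun q hq => by
      simp only [Function.mem_support, Rf] at hq
      by_contra h
      have hfq : f q = 0 := image_eq_zero_of_notMem_tsupport h
      have hgq : ∀ v : EE n, pderiv' n v f q = 0 := fun v =>
        Function.notMem_support.mp (fun hs => h (support_pderiv_subset v hs))
      exact hq (by simp [hfq, hgq]))
  -- divergence terms
  have hVi : ∀ i : Fin n, ContDiff ℝ (⊤ : ℕ∞) (Vi f i) := fun i =>
    smooth_mul_rpow hδ ((hf.mul (contDiff_pderiv hf _)).neg)
      (fun q hq => by simp [hf0 q hq]) _
  have hVy : ContDiff ℝ (⊤ : ℕ∞) (Vy f) := by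
    refine ContDiff.add ?_ ?_
    · exact smooth_mul_rpow hδ ((hf.mul (contDiff_pderiv hf _)).neg)
        (fun q hq => by simp [hf0 q hq]) _
    · exact smooth_mul_rpow hδ (contDiff_const.mul (hf.mul hf))
        (fun q hq => by simp [hf0 q hq]) _
  have hVisupp : ∀ i : Fin n, HasCompactSupport (Vi f i) := fun i =>
    hfc.mono' (fun q hq => by
      by_contra h
      exact Function.mem_support.mp hq (by simp [Vi, image_eq_zero_of_notMem_tsupport h]))
  have hVysupp : HasCompactSupport (Vy f) :=
    hfc.mono' (fun q hq => by
      by_contra h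
      exact Function.mem_support.mp hq (by simp [Vy, image_eq_zero_of_notMem_tsupport h]))
  have hdivVi : ∀ i : Fin n, (∫ q, pderiv' n (ex n i) (Vi f i) q) = 0 := fun i =>
    integral_fderiv_apply_eq_zero (Vi f i) ((hVi i).of_le (by simp)) (hVisupp i) (ex n i)
  have hdivVy : (∫ q, pderiv' n (ey n) (Vy f) q) = 0 :=
    integral_fderiv_apply_eq_zero (Vy f) (hVy.of_le (by simp)) hVysupp (ey n)
  set D : EE n → ℝ := fun q =>
    (∑ i, pderiv' n (ex n i) (Vi f i) q) + pderiv' n (ey n) (Vy f) q with hD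
  have hIVi : ∀ i : Fin n, Integrable (pderiv' n (ex n i) (Vi f i)) := fun i =>
    ((contDiff_pderiv (hVi i) _).continuous).integrable_of_hasCompactSupport
      ((hVisupp i).mono' (support_pderiv_subset _))
  have hIVy : Integrable (pderiv' n (ey n) (Vy f)) :=
    ((contDiff_pderiv hVy _).continuous).integrable_of_hasCompactSupport
      (hVysupp.mono' (support_pderiv_subset _))
  have hID : Integrable D := (integrable_finset_sum _ fun i _ => hIVi i).add hIVy
  have htsVi : ∀ i, tsupport (Vi f i) ⊆ tsupport f := fun i =>
    closure_minimal (fun q hq => by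
      by_contra h
      exact Function.mem_support.mp hq (by simp [Vi, image_eq_zero_of_notMem_tsupport h]))
      (isClosed_tsupport f)
  have htsVy : tsupport (Vy f) ⊆ tsupport f := closure_minimal (fun q hq => by
      by_contra h
      exact Function.mem_support.mp hq (by simp [Vy, image_eq_zero_of_notMem_tsupport h]))
      (isClosed_tsupport f)
  have hD0 : ∀ q : EE n, q ∉ upperH n → D q = 0 := by
    intro q hq
    simp only [upperH, Set.mem_setOf_eq, not_lt] at hq
    have hq2 : q.2 < δ := lt_of_le_of_lt hq hδ
    have h1 : ∀ i : Fin n, pderiv' n (ex n i) (Vi f i) q = 0 := fun i =>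
      Function.notMem_support.mp (fun hs => hδf q hq2 (htsVi i (support_pderiv_subset _ hs)))
    have h2 : pderiv' n (ey n) (Vy f) q = 0 :=
      Function.notMem_support.mp (fun hs => hδf q hq2 (htsVy (support_pderiv_subset _ hs)))
    simp [hD, h1, h2]
  have hDint : (∫ q in upperH n, D q) = 0 := by
    rw [setIntegral_eq_integral_of_forall_compl_eq_zero hD0, hD]
    rw [integral_add (integrable_finset_sum _ fun i _ => hIVi i) hIVy,
      integral_finset_sum _ (fun i _ => hIVi i)]
    simp [hdivVi, hdivVy]
  have hpt : ∀ q ∈ upperH n, -(G3 q) = t * G1 q + D q + Rf f q := by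
    intro q hq
    simp only [hG1, hG3, hD, ht]
    exact key_pointwise hf q hq
  have hIOn1 : IntegrableOn G1 (upperH n) := hI1.1.integrableOn
  have hIOn2 : IntegrableOn G2 (upperH n) := hI2.1.integrableOn
  have hIOn3 : IntegrableOn G3 (upperH n) := hI3.1.integrableOn
  have hIOn5 : IntegrableOn G5 (upperH n) := hI5.1.integrableOn
  have hIOn4 : IntegrableOn (Rf f) (upperH n) := hI4.1.integrableOn
  have hIOnD : IntegrableOn D (upperH n) := hID.integrableOn
  have hR_nonneg : 0 ≤ ∫ q in upperH n, Rf f q := by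
    refine setIntegral_nonneg measurableSet_upperH fun q hq => ?_
    have hq2 : (0:ℝ) ≤ q.2 := le_of_lt hq
    exact add_nonneg (Finset.sum_nonneg fun i _ =>
      mul_nonneg (sq_nonneg _) (Real.rpow_nonneg hq2 _)) (sq_nonneg _)
  have hhardy : t * ∫ q in upperH n, G1 q ≤ - ∫ q in upperH n, G3 q := by
    have hIc : IntegrableOn (fun q => t * G1 q) (upperH n) := by
      exact hIOn1.const_mul t
    have hIa : IntegrableOn (fun q => t * G1 q + D q) (upperH n) := by
      exact hIc.add hIOnD
    have e1 : (∫ q in upperH n, G3 q) = - ∫ q in upperH n, -(G3 q) := by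
      rw [integral_neg]; ring
    have e2 : (∫ q in upperH n, (fun q => -(G3 q)) q)
        = ∫ q in upperH n, (fun q => t * G1 q + D q + Rf f q) q :=
      setIntegral_congr_fun measurableSet_upperH (fun q hq => hpt q hq)
    simp only at e2
    have e3 : (∫ q in upperH n, (t * G1 q + D q) + Rf f q)
        = (∫ q in upperH n, t * G1 q + D q) + ∫ q in upperH n, Rf f q :=
      integral_add hIa hIOn4
    have e4 : (∫ q in upperH n, t * G1 q + D q)
        = (∫ q in upperH n, t * G1 q) + ∫ q in upperH n, D q :=
      integral_add hIc hIOnD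
    have e5 : (∫ q in upperH n, t * G1 q) = t * ∫ q in upperH n, G1 q :=
      integral_const_mul t _
    rw [e1, e2]
    rw [show (fun q => t * G1 q + D q + Rf f q) = fun q => (t * G1 q + D q) + Rf f q from rfl]
    rw [e3, e4, e5, hDint]
    linarith
  have hG5_nonneg : 0 ≤ ∫ q in upperH n, G5 q := setIntegral_nonneg measurableSet_upperH
    (fun q hq => mul_nonneg (sq_nonneg _) (Real.rpow_nonneg (le_of_lt hq) _))
  have hexp : ∀ q ∈ upperH n, G5 q = G2 q + (2*t) * G3 q + t^2 * G1 q := by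
    intro q hq
    simp only [hG5, hG2, hG3, hG1]
    ring
  have hsplit : (∫ q in upperH n, G5 q)
      = (∫ q in upperH n, G2 q) + (2*t) * (∫ q in upperH n, G3 q)
        + t^2 * ∫ q in upperH n, G1 q := by
    have hId : IntegrableOn (fun q => (2*t) * G3 q) (upperH n) := by
      exact hIOn3.const_mul (2*t)
    have hIe : IntegrableOn (fun q => t^2 * G1 q) (upperH n) := by
      exact hIOn1.const_mul (t^2)
    have hIb : IntegrableOn (fun q => G2 q + (2*t) * G3 q) (upperH n) := by
      exact hIOn2.add hId
    rw [setIntegral_congr_fun measurableSet_upperH hexp]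
    rw [show (fun q => G2 q + (2*t) * G3 q + t^2 * G1 q)
        = fun q => (G2 q + (2*t) * G3 q) + t^2 * G1 q from rfl]
    rw [integral_add hIb hIe, integral_add hIOn2 hId, integral_const_mul, integral_const_mul]
  rw [hsplit] at hG5_nonneg
  have h2t : (2*t) * (∫ q in upperH n, G3 q) ≤ (2*t) * (-(t * ∫ q in upperH n, G1 q)) := by
    refine mul_le_mul_of_nonneg_left ?_ (by positivity)
    linarith
  have hpow : ((n:ℝ)/2)^4 = t^2 := by rw [ht]; ring
  rw [hpow]
  nlinarith [hG5_nonneg, h2t]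


lemma tsupport_hypLap_subset {f : EE n → ℝ} : tsupport (hypLap n f) ⊆ tsupport f :=
  closure_minimal support_hypLap_subset (isClosed_tsupport f)

lemma iter_props {f : EE n → ℝ} (hf : ContDiff ℝ (⊤ : ℕ∞) f) (hfc : HasCompactSupport f)
    (hfH : tsupport f ⊆ upperH n) (m : ℕ) :
    ContDiff ℝ (⊤ : ℕ∞) ((hypLap n)^[m] f) ∧ HasCompactSupport ((hypLap n)^[m] f) ∧
      tsupport ((hypLap n)^[m] f) ⊆ upperH n := by
  induction m with
  | zero => exact ⟨hf, hfc, hfH⟩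
  | succ m ih =>
    rw [Function.iterate_succ_apply']
    exact ⟨contDiff_hypLap ih.1, hasCompactSupport_hypLap ih.2.1,
      tsupport_hypLap_subset.trans ih.2.2⟩

end Helpers

/-- the even-order clamped polyharmonic lower bound on hyperbolic space:
`∫_H (L^m f)² y^{−n−1} ≥ (n/2)^{4m} ∫_H f² y^{−n−1}` for `f ∈ C_c^∞(H)`, `m ≥ 1`. -/
theorem stmt9 (n : ℕ) (hn : 1 ≤ n) (m : ℕ) (hm : 1 ≤ m)
    (f : (Fin n → ℝ) × ℝ → ℝ) (hf : ContDiff ℝ (⊤ : ℕ∞) f)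
    (hfc : HasCompactSupport f) (hfH : tsupport f ⊆ upperH n) :
    ((n : ℝ) / 2) ^ (4 * m) * ∫ q in upperH n, f q ^ 2 * q.2 ^ (-(n : ℝ) - 1) ≤
      ∫ q in upperH n, ((hypLap n)^[m] f q) ^ 2 * q.2 ^ (-(n : ℝ) - 1) := by
  clear hm hn
  induction m with
  | zero => simp
  | succ m ih =>
    obtain ⟨hsm, hcs, hts⟩ := iter_props hf hfc hfH m
    calc ((n : ℝ) / 2) ^ (4 * (m+1)) * ∫ q in upperH n, f q ^ 2 * q.2 ^ (-(n : ℝ) - 1)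
        = ((n:ℝ)/2)^4 * (((n : ℝ) / 2) ^ (4 * m)
            * ∫ q in upperH n, f q ^ 2 * q.2 ^ (-(n : ℝ) - 1)) := by
          rw [show 4 * (m+1) = 4 * m + 4 by ring, pow_add]
          ring
      _ ≤ ((n:ℝ)/2)^4 * ∫ q in upperH n, ((hypLap n)^[m] f q) ^ 2 * q.2 ^ (-(n : ℝ) - 1) := by
          refine mul_le_mul_of_nonneg_left ih (by positivity)
      _ ≤ ∫ q in upperH n, (hypLap n ((hypLap n)^[m] f) q) ^ 2 * q.2 ^ (-(n : ℝ) - 1) :=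
          key_ineq hsm hcs hts
      _ = ∫ q in upperH n, ((hypLap n)^[m+1] f q) ^ 2 * q.2 ^ (-(n : ℝ) - 1) := by
          rw [Function.iterate_succ_apply']
end

section
/- Let n ≥ 1 and define the hyperbolic Laplacian L on functions on H = ℝ^n × (0, ∞) by (Lf)(x,y) = y²·(Δf)(x,y) − (n−1)·y·(∂_y f)(x,y). Then for every smooth f : ℝ^n × ℝ → ℝ with compact support contained in H, one has ∫_H (Lf)(x,y)² · y^{−n−1} dx dy ≥ (n²/4) · ∫_H ‖∇f(x,y)‖² · y^{1−n} dx dy. -/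
open MeasureTheory

/-! ### Auxiliary material for the proof -/

open Topology Filter

noncomputable section AuxStmt11

instance haarProdStmt11 (n : ℕ) :
    MeasureTheory.Measure.IsAddHaarMeasure (volume : Measure ((Fin n → ℝ) × ℝ)) := by
  rw [Measure.volume_eq_prod]; infer_instance

/-- A smooth positive function equal to `y` for `y ≥ ε`. -/
def psiC (ε : ℝ) (y : ℝ) : ℝ := ε / 2 + (y - ε / 2) * Real.smoothTransition ((2 * y - ε) / ε)

lemma psiC_smooth (ε : ℝ) : ContDiff ℝ (⊤ : ℕ∞) (psiC ε) := by
  apply contDiff_const.add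
  apply (contDiff_id.sub contDiff_const).mul
  exact (Real.smoothTransition.contDiff (n := (⊤ : ℕ∞))).comp
    (((contDiff_const.mul contDiff_id).sub contDiff_const).div_const ε)

lemma psiC_pos {ε : ℝ} (hε : 0 < ε) (y : ℝ) : 0 < psiC ε y := by
  rcases le_or_gt y (ε / 2) with h | h
  · have hz : Real.smoothTransition ((2 * y - ε) / ε) = 0 := by
      apply Real.smoothTransition.zero_of_nonpos
      apply div_nonpos_of_nonpos_of_nonneg (by linarith) hε.le
    rw [psiC, hz, mul_zero, add_zero]; linarith
  · have h1 : 0 ≤ (y - ε / 2) * Real.smoothTransition ((2 * y - ε) / ε) :=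
      mul_nonneg (by linarith) (Real.smoothTransition.nonneg _)
    rw [psiC]; linarith

lemma psiC_eq {ε y : ℝ} (hε : 0 < ε) (hy : ε ≤ y) : psiC ε y = y := by
  have h1 : (1 : ℝ) ≤ (2 * y - ε) / ε := (one_le_div hε).2 (by linarith)
  rw [psiC, Real.smoothTransition.one_of_one_le h1, mul_one]; ring

/-- The weight `ψ(y)^m`. -/
def wz (n : ℕ) (ε : ℝ) (m : ℤ) : (Fin n → ℝ) × ℝ → ℝ := fun p => psiC ε p.2 ^ m

lemma wz_pos {n : ℕ} {ε : ℝ} (hε : 0 < ε) (m : ℤ) (p : (Fin n → ℝ) × ℝ) :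
    0 < wz n ε m p := zpow_pos (psiC_pos hε _) m

lemma wz_eq {n : ℕ} {ε : ℝ} (hε : 0 < ε) {p : (Fin n → ℝ) × ℝ} (hp : ε ≤ p.2) (m : ℤ) :
    wz n ε m p = p.2 ^ m := by rw [wz, psiC_eq hε hp]

lemma wz_smooth {n : ℕ} {ε : ℝ} (hε : 0 < ε) (m : ℤ) : ContDiff ℝ (⊤ : ℕ∞) (wz n ε m) := by
  have h : ContDiff ℝ (⊤ : ℕ∞) fun p : (Fin n → ℝ) × ℝ => psiC ε p.2 :=
    (psiC_smooth ε).comp contDiff_snd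
  cases m with
  | ofNat k =>
    have := h.pow k
    have e : wz n ε (Int.ofNat k) = fun p : (Fin n → ℝ) × ℝ => psiC ε p.2 ^ k := by
      funext p; rw [wz]; exact_mod_cast zpow_natCast (psiC ε p.2) k
    rw [e]; exact this
  | negSucc k =>
    have e : wz n ε (Int.negSucc k) = fun p : (Fin n → ℝ) × ℝ => (psiC ε p.2 ^ (k + 1))⁻¹ :=
      funext fun p => zpow_negSucc _ _
    rw [e]
    exact (h.pow (k + 1)).inv fun p => pow_ne_zero _ (psiC_pos hε _).ne'

lemma integral_pderiv_eq_zero {n : ℕ} {G : (Fin n → ℝ) × ℝ → ℝ} (hG : ContDiff ℝ (⊤ : ℕ∞) G)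
    (hGc : HasCompactSupport G) (v : (Fin n → ℝ) × ℝ) : ∫ p, fderiv ℝ G p v = 0 := by
  obtain ⟨C, hC⟩ := ContDiff.lipschitzWith_of_hasCompactSupport hGc hG (by simp)
  have h := LipschitzWith.integral_lineDeriv_mul_eq (μ := volume)
    (LipschitzWith.const (b := (1 : ℝ))) hC hGc (-v)
  have h1 : ∀ x : (Fin n → ℝ) × ℝ, lineDeriv ℝ (fun _ => (1 : ℝ)) x (-v) = 0 := by
    intro x
    rw [(differentiableAt_const (1 : ℝ)).lineDeriv_eq_fderiv]
    simp
  have h2 : ∀ x : (Fin n → ℝ) × ℝ, lineDeriv ℝ G x (-(-v)) = fderiv ℝ G x v := by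
    intro x
    rw [neg_neg, ((hG.differentiable (by simp)) x).lineDeriv_eq_fderiv]
  simp only [h1, h2, zero_mul, integral_zero, mul_one] at h
  exact h.symm

lemma buckle_arith {A B C k : ℝ} (hB0 : 0 ≤ B) (hA0 : 0 ≤ A) (hk : 0 ≤ k)
    (hB2 : B * B ≤ C * A) (hMB : k * C ≤ B) : k * B ≤ A := by
  rcases eq_or_lt_of_le hB0 with hB | hB
  · rw [← hB, mul_zero]
    exact hA0
  · have h1 : k * (B * B) ≤ k * (C * A) := mul_le_mul_of_nonneg_left hB2 hk
    have h2 : (k * C) * A ≤ B * A := mul_le_mul_of_nonneg_right hMB hA0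
    have h3 : (k * B) * B ≤ A * B := by nlinarith [h1, h2]
    exact le_of_mul_le_mul_right h3 hB

end AuxStmt11

/-- the buckling lower bound on hyperbolic space:
`∫_H (Lf)² y^{−n−1} ≥ (n²/4) ∫_H ‖∇f‖² y^{1−n}` for `f ∈ C_c^∞(H)`. -/
theorem stmt11 (n : ℕ) (hn : 1 ≤ n)
    (f : (Fin n → ℝ) × ℝ → ℝ) (hf : ContDiff ℝ (⊤ : ℕ∞) f)
    (hfc : HasCompactSupport f) (hfH : tsupport f ⊆ upperH n) :
    (n : ℝ) ^ 2 / 4 * ∫ q in upperH n, gradSq n f q * q.2 ^ (1 - (n : ℝ)) ≤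
      ∫ q in upperH n, (hypLap n f q) ^ 2 * q.2 ^ (-(n : ℝ) - 1) := by
  classical
  have hone : (1 : WithTop ℕ∞) ≤ ((⊤ : ℕ∞) : WithTop ℕ∞) := by exact_mod_cast le_top
  have hord : ((⊤ : ℕ∞) : WithTop ℕ∞) + 1 ≤ ((⊤ : ℕ∞) : WithTop ℕ∞) := by
    exact_mod_cast le_top
  have hf' : ContDiff ℝ ((⊤ : ℕ∞) : WithTop ℕ∞) f := hf.of_le (by simp)
  -- choose ε > 0 with tsupport f ⊆ {p | ε < p.2}
  obtain ⟨ε, hε, hsup⟩ : ∃ ε : ℝ, 0 < ε ∧ ∀ p ∈ tsupport f, ε < p.2 := by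
    by_cases hne : (tsupport f).Nonempty
    · obtain ⟨p₀, hp₀, hmin⟩ := hfc.exists_isMinOn hne continuous_snd.continuousOn
      refine ⟨p₀.2 / 2, half_pos (hfH hp₀), fun p hp => ?_⟩
      have h1 : p₀.2 ≤ p.2 := hmin hp
      have h2 : (0 : ℝ) < p₀.2 := hfH hp₀
      linarith
    · exact ⟨1, one_pos, fun p hp => absurd ⟨p, hp⟩ hne⟩
  have hopen : IsOpen {p : (Fin n → ℝ) × ℝ | ε < p.2} := isOpen_lt continuous_const continuous_snd
  have hcompl : ∀ p : (Fin n → ℝ) × ℝ, ¬ ε < p.2 → p ∉ tsupport f := fun p h hp => h (hsup p hp)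
  have hfd : Differentiable ℝ f := hf'.differentiable (by simp)
  -- smoothness of the partial derivatives
  have hg : ∀ v : (Fin n → ℝ) × ℝ, ContDiff ℝ ((⊤ : ℕ∞) : WithTop ℕ∞) (pderiv' n v f) :=
    fun v => (hf'.fderiv_right hord).clm_apply contDiff_const
  have hgd : ∀ v : (Fin n → ℝ) × ℝ, Differentiable ℝ (pderiv' n v f) := fun v =>
    (hg v).differentiable (by simp)
  have hgg : ∀ v : (Fin n → ℝ) × ℝ,
      ContDiff ℝ ((⊤ : ℕ∞) : WithTop ℕ∞) (pderiv' n v (pderiv' n v f)) := fun v =>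
    ((hg v).fderiv_right hord).clm_apply contDiff_const
  -- fderiv of the zero function
  have fz : ∀ p : (Fin n → ℝ) × ℝ, fderiv ℝ (0 : ((Fin n → ℝ) × ℝ) → ℝ) p = 0 := fun p =>
    fderiv_const_apply 0
  -- vanishing off the support
  have hg0 : ∀ (v : (Fin n → ℝ) × ℝ) (p), p ∉ tsupport f → pderiv' n v f p = 0 := by
    intro v p hp
    have h0 : f =ᶠ[𝓝 p] 0 := notMem_tsupport_iff_eventuallyEq.1 hp
    show fderiv ℝ f p v = 0
    rw [h0.fderiv_eq, fz p]
    rfl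
  have hg20 : ∀ (v : (Fin n → ℝ) × ℝ) (p), p ∉ tsupport f →
      pderiv' n v (pderiv' n v f) p = 0 := by
    intro v p hp
    have hev : pderiv' n v f =ᶠ[𝓝 p] 0 := by
      filter_upwards [(isClosed_tsupport f).isOpen_compl.mem_nhds hp] with q hq using hg0 v q hq
    show fderiv ℝ (pderiv' n v f) p v = 0
    rw [hev.fderiv_eq, fz p]
    rfl
  have hgrad0 : ∀ p, p ∉ tsupport f → gradSq n f p = 0 := by
    intro p hp; simp [gradSq, hg0 _ p hp]
  have hhyp0 : ∀ p, p ∉ tsupport f → hypLap n f p = 0 := by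
    intro p hp; simp [hypLap, eucLap, hg0 _ p hp, hg20 _ p hp]
  -- continuity
  have hgc : ∀ v : (Fin n → ℝ) × ℝ, Continuous (pderiv' n v f) := fun v => (hg v).continuous
  have hgradc : Continuous (gradSq n f) := by
    apply Continuous.add
    · exact continuous_finset_sum _ fun i _ => (hgc _).pow 2
    · exact (hgc _).pow 2
  have heucc : Continuous (eucLap n f) := by
    apply Continuous.add
    · exact continuous_finset_sum _ fun i _ => (hgg _).continuous
    · exact (hgg _).continuous
  have hhypc : Continuous (hypLap n f) :=
    ((continuous_snd.pow 2).mul heucc).sub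
      ((continuous_const.mul continuous_snd).mul (hgc _))
  -- compact support / integrability helpers
  have hCS : ∀ g : (Fin n → ℝ) × ℝ → ℝ, (∀ p, p ∉ tsupport f → g p = 0) →
      HasCompactSupport g := by
    intro g h0
    exact hfc.mono' fun p hp => by by_contra hc; exact hp (h0 p hc)
  have hint : ∀ g : (Fin n → ℝ) × ℝ → ℝ, Continuous g → (∀ p, p ∉ tsupport f → g p = 0) →
      Integrable g := fun g hc h0 => hc.integrable_of_hasCompactSupport (hCS g h0)
  have hfd0 : ∀ g : (Fin n → ℝ) × ℝ → ℝ, (∀ q, q ∉ tsupport f → g q = 0) →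
      ∀ p, p ∉ tsupport f → fderiv ℝ g p = 0 := by
    intro g h0 p hp
    have hev : g =ᶠ[𝓝 p] 0 := by
      filter_upwards [(isClosed_tsupport f).isOpen_compl.mem_nhds hp] with q hq using h0 q hq
    rw [hev.fderiv_eq, fz p]
  -- zpow relations on the good region
  have hWa : ∀ p : (Fin n → ℝ) × ℝ, ε < p.2 →
      wz n ε (1 - (n : ℤ)) p = wz n ε (-(n : ℤ) - 1) p * p.2 ^ 2 := by
    intro p hp
    have hy : (0 : ℝ) < p.2 := hε.trans hp
    rw [wz_eq hε hp.le, wz_eq hε hp.le, ← zpow_natCast p.2 2, ← zpow_add₀ hy.ne']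
    congr 1
    push_cast
    ring
  have hWb : ∀ p : (Fin n → ℝ) × ℝ, ε < p.2 →
      wz n ε (-(n : ℤ)) p = wz n ε (-(n : ℤ) - 1) p * p.2 := by
    intro p hp
    have hy : (0 : ℝ) < p.2 := hε.trans hp
    rw [wz_eq hε hp.le, wz_eq hε hp.le]
    conv_lhs => rw [show -(n : ℤ) = (-(n : ℤ) - 1) + 1 by ring]
    rw [zpow_add₀ hy.ne', zpow_one]
  -- the first pointwise derivative computation
  have L1 : ∀ v p : (Fin n → ℝ) × ℝ,
      fderiv ℝ (fun q => f q * wz n ε (1 - (n : ℤ)) q * pderiv' n v f q) p v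
        = f p * wz n ε (1 - (n : ℤ)) p * pderiv' n v (pderiv' n v f) p
          + (1 - (n : ℝ)) * v.2 * (f p * pderiv' n v f p * wz n ε (-(n : ℤ)) p)
          + wz n ε (1 - (n : ℤ)) p * (pderiv' n v f p) ^ 2 := by
    intro v p
    by_cases hp : ε < p.2
    · have hy : (0 : ℝ) < p.2 := hε.trans hp
      have hevψ : wz n ε (1 - (n : ℤ)) =ᶠ[𝓝 p] fun q => q.2 ^ (1 - (n : ℤ)) := by
        filter_upwards [hopen.mem_nhds hp] with q hq using wz_eq hε (le_of_lt hq) _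
      have hw1 : HasFDerivAt (wz n ε (1 - (n : ℤ)))
          ((((1 - (n : ℤ) : ℤ) : ℝ) * p.2 ^ (1 - (n : ℤ) - 1)) •
            (ContinuousLinearMap.snd ℝ (Fin n → ℝ) ℝ)) p := by
        have h := (hasDerivAt_zpow (1 - (n : ℤ)) p.2 (Or.inl hy.ne')).comp_hasFDerivAt p
          ((ContinuousLinearMap.snd ℝ (Fin n → ℝ) ℝ).hasFDerivAt)
        exact h.congr_of_eventuallyEq hevψ
      have hVd : HasFDerivAt (fun q => f q * wz n ε (1 - (n : ℤ)) q * pderiv' n v f q)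
          ((f p * wz n ε (1 - (n : ℤ)) p) • fderiv ℝ (pderiv' n v f) p
            + pderiv' n v f p • (f p • ((((1 - (n : ℤ) : ℤ) : ℝ) * p.2 ^ (1 - (n : ℤ) - 1)) •
                (ContinuousLinearMap.snd ℝ (Fin n → ℝ) ℝ))
              + wz n ε (1 - (n : ℤ)) p • fderiv ℝ f p)) p :=
        ((hfd p).hasFDerivAt.mul hw1).mul ((hgd v) p).hasFDerivAt
      rw [hVd.fderiv]
      have e2 : p.2 ^ (1 - (n : ℤ) - 1) = wz n ε (-(n : ℤ)) p := by
        rw [wz_eq hε hp.le]; congr 1; ring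
      simp only [ContinuousLinearMap.add_apply, ContinuousLinearMap.coe_smul',
        Pi.smul_apply, ContinuousLinearMap.coe_snd', smul_eq_mul, pderiv', e2]
      push_cast
      ring
    · have hp' : p ∉ tsupport f := hcompl p hp
      have hev : (fun q => f q * wz n ε (1 - (n : ℤ)) q * pderiv' n v f q)
          =ᶠ[𝓝 p] (fun _ => (0 : ℝ)) := by
        filter_upwards [(isClosed_tsupport f).isOpen_compl.mem_nhds hp'] with q hq
        simp [image_eq_zero_of_notMem_tsupport hq]
      rw [hev.fderiv_eq, fderiv_const_apply]
      simp [image_eq_zero_of_notMem_tsupport hp', hg0 v p hp']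
  -- the second pointwise derivative computation
  have L2 : ∀ p : (Fin n → ℝ) × ℝ,
      fderiv ℝ (fun q => f q * f q * wz n ε (-(n : ℤ)) q) p (ey n)
        = 2 * f p * pderiv' n (ey n) f p * wz n ε (-(n : ℤ)) p
          - (n : ℝ) * (f p * f p) * wz n ε (-(n : ℤ) - 1) p := by
    intro p
    by_cases hp : ε < p.2
    · have hy : (0 : ℝ) < p.2 := hε.trans hp
      have hevψ : wz n ε (-(n : ℤ)) =ᶠ[𝓝 p] fun q => q.2 ^ (-(n : ℤ)) := by
        filter_upwards [hopen.mem_nhds hp] with q hq using wz_eq hε (le_of_lt hq) _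
      have hw2 : HasFDerivAt (wz n ε (-(n : ℤ)))
          ((((-(n : ℤ) : ℤ) : ℝ) * p.2 ^ (-(n : ℤ) - 1)) •
            (ContinuousLinearMap.snd ℝ (Fin n → ℝ) ℝ)) p := by
        have h := (hasDerivAt_zpow (-(n : ℤ)) p.2 (Or.inl hy.ne')).comp_hasFDerivAt p
          ((ContinuousLinearMap.snd ℝ (Fin n → ℝ) ℝ).hasFDerivAt)
        exact h.congr_of_eventuallyEq hevψ
      have hVd : HasFDerivAt (fun q => f q * f q * wz n ε (-(n : ℤ)) q)
          ((f p * f p) • ((((-(n : ℤ) : ℤ) : ℝ) * p.2 ^ (-(n : ℤ) - 1)) •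
              (ContinuousLinearMap.snd ℝ (Fin n → ℝ) ℝ))
            + wz n ε (-(n : ℤ)) p • (f p • fderiv ℝ f p + f p • fderiv ℝ f p)) p :=
        ((hfd p).hasFDerivAt.mul (hfd p).hasFDerivAt).mul hw2
      rw [hVd.fderiv]
      have e3 : p.2 ^ (-(n : ℤ) - 1) = wz n ε (-(n : ℤ) - 1) p := by
        rw [wz_eq hε hp.le]
      have hey2 : (ey n).2 = (1 : ℝ) := rfl
      simp only [ContinuousLinearMap.add_apply, ContinuousLinearMap.coe_smul',
        Pi.smul_apply, ContinuousLinearMap.coe_snd', smul_eq_mul, pderiv', e3, hey2]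
      push_cast
      ring
    · have hp' : p ∉ tsupport f := hcompl p hp
      have hev : (fun q => f q * f q * wz n ε (-(n : ℤ)) q) =ᶠ[𝓝 p] (fun _ => (0 : ℝ)) := by
        filter_upwards [(isClosed_tsupport f).isOpen_compl.mem_nhds hp'] with q hq
        simp [image_eq_zero_of_notMem_tsupport hq]
      rw [hev.fderiv_eq, fderiv_const_apply]
      simp [image_eq_zero_of_notMem_tsupport hp', hg0 _ p hp']
  -- the key pointwise identity relating the divergence to the integrands
  have key1 : ∀ p : (Fin n → ℝ) × ℝ,
      f p * wz n ε (1 - (n : ℤ)) p * eucLap n f p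
        + (1 - (n : ℝ)) * (f p * pderiv' n (ey n) f p * wz n ε (-(n : ℤ)) p)
        = f p * hypLap n f p * wz n ε (-(n : ℤ) - 1) p := by
    intro p
    by_cases hp : ε < p.2
    · rw [hWa p hp, hWb p hp]
      simp only [hypLap]
      ring
    · rw [image_eq_zero_of_notMem_tsupport (hcompl p hp)]
      ring
  have I1 : ∀ p : (Fin n → ℝ) × ℝ,
      (∑ i, fderiv ℝ (fun q => f q * wz n ε (1 - (n : ℤ)) q * pderiv' n (ex n i) f q) p (ex n i))
        + fderiv ℝ (fun q => f q * wz n ε (1 - (n : ℤ)) q * pderiv' n (ey n) f q) p (ey n)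
        = gradSq n f p * wz n ε (1 - (n : ℤ)) p
          + f p * hypLap n f p * wz n ε (-(n : ℤ) - 1) p := by
    intro p
    have hx2 : ∀ i, (ex n i).2 = (0 : ℝ) := fun i => rfl
    have hy2 : (ey n).2 = (1 : ℝ) := rfl
    simp only [L1, hx2, hy2, mul_zero, zero_mul, add_zero, mul_one]
    rw [Finset.sum_add_distrib, ← Finset.mul_sum, ← Finset.mul_sum]
    have he : (∑ i, pderiv' n (ex n i) (pderiv' n (ex n i) f) p)
        = eucLap n f p - pderiv' n (ey n) (pderiv' n (ey n) f) p := by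
      simp only [eucLap]; ring
    have hgr : (∑ i, (pderiv' n (ex n i) f p) ^ 2)
        = gradSq n f p - (pderiv' n (ey n) f p) ^ 2 := by
      simp only [gradSq]; ring
    rw [he, hgr]
    linear_combination key1 p
  -- continuity of the weights
  have hw1c : Continuous (wz n ε (1 - (n : ℤ))) := (wz_smooth hε _).continuous
  have hw2c : Continuous (wz n ε (-(n : ℤ))) := (wz_smooth hε _).continuous
  have hw3c : Continuous (wz n ε (-(n : ℤ) - 1)) := (wz_smooth hε _).continuous
  -- integrability of the various integrands
  have hIgrad : Integrable (fun p => gradSq n f p * wz n ε (1 - (n : ℤ)) p) :=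
    hint _ (hgradc.mul hw1c) fun p hp => by rw [hgrad0 p hp, zero_mul]
  have hIfL : Integrable (fun p => f p * hypLap n f p * wz n ε (-(n : ℤ) - 1) p) :=
    hint _ ((hf.continuous.mul hhypc).mul hw3c) fun p hp => by
      rw [image_eq_zero_of_notMem_tsupport hp]; ring
  have hIC : Integrable (fun p => f p * f p * wz n ε (-(n : ℤ) - 1) p) :=
    hint _ ((hf.continuous.mul hf.continuous).mul hw3c) fun p hp => by
      rw [image_eq_zero_of_notMem_tsupport hp]; ring
  have hIa3 : Integrable (fun p => f p * pderiv' n (ey n) f p * wz n ε (-(n : ℤ)) p) :=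
    hint _ ((hf.continuous.mul (hgc _)).mul hw2c) fun p hp => by
      rw [image_eq_zero_of_notMem_tsupport hp]; ring
  have hIa5 : Integrable (fun p => (pderiv' n (ey n) f p) ^ 2 * wz n ε (1 - (n : ℤ)) p) :=
    hint _ (((hgc _).pow 2).mul hw1c) fun p hp => by rw [hg0 _ p hp]; ring
  have hIA : Integrable (fun p => (hypLap n f p) ^ 2 * wz n ε (-(n : ℤ) - 1) p) :=
    hint _ ((hhypc.pow 2).mul hw3c) fun p hp => by rw [hhyp0 p hp]; ring
  -- integration by parts, first form
  have hVsm : ∀ v : (Fin n → ℝ) × ℝ, ContDiff ℝ ((⊤ : ℕ∞) : WithTop ℕ∞)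
      (fun q => f q * wz n ε (1 - (n : ℤ)) q * pderiv' n v f q) := fun v =>
    (hf'.mul (wz_smooth hε _)).mul (hg v)
  have hVcs : ∀ v : (Fin n → ℝ) × ℝ,
      HasCompactSupport (fun q => f q * wz n ε (1 - (n : ℤ)) q * pderiv' n v f q) := fun v =>
    hCS _ fun p hp => by rw [image_eq_zero_of_notMem_tsupport hp]; ring
  have hIBP1 : ∀ v : (Fin n → ℝ) × ℝ,
      ∫ p, fderiv ℝ (fun q => f q * wz n ε (1 - (n : ℤ)) q * pderiv' n v f q) p v = 0 :=
    fun v => integral_pderiv_eq_zero (hVsm v) (hVcs v) v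
  have hIDv : ∀ v : (Fin n → ℝ) × ℝ,
      Integrable (fun p => fderiv ℝ
        (fun q => f q * wz n ε (1 - (n : ℤ)) q * pderiv' n v f q) p v) := by
    intro v
    apply hint
    · exact (((hVsm v).fderiv_right hord).clm_apply contDiff_const).continuous
    · intro p hp
      rw [hfd0 _ (fun r hr => by rw [image_eq_zero_of_notMem_tsupport hr]; ring) p hp]
      rfl
  have hsum0 : ∫ p,
      ((∑ i, fderiv ℝ (fun q => f q * wz n ε (1 - (n : ℤ)) q * pderiv' n (ex n i) f q) p (ex n i))
        + fderiv ℝ (fun q => f q * wz n ε (1 - (n : ℤ)) q * pderiv' n (ey n) f q) p (ey n))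
      = 0 := by
    rw [integral_add (integrable_finset_sum _ fun i _ => hIDv (ex n i)) (hIDv (ey n)),
      integral_finset_sum _ fun i _ => hIDv (ex n i)]
    simp [hIBP1]
  have hF1 : (∫ p, gradSq n f p * wz n ε (1 - (n : ℤ)) p)
      + ∫ p, f p * hypLap n f p * wz n ε (-(n : ℤ) - 1) p = 0 := by
    rw [← integral_add hIgrad hIfL]
    rw [show (fun p => gradSq n f p * wz n ε (1 - (n : ℤ)) p
        + f p * hypLap n f p * wz n ε (-(n : ℤ) - 1) p)
      = (fun p =>
        (∑ i, fderiv ℝ (fun q => f q * wz n ε (1 - (n : ℤ)) q * pderiv' n (ex n i) f q) p (ex n i))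
        + fderiv ℝ (fun q => f q * wz n ε (1 - (n : ℤ)) q * pderiv' n (ey n) f q) p (ey n))
      from funext fun p => (I1 p).symm]
    exact hsum0
  -- integration by parts, second form
  have hIBP2 : ∫ p, fderiv ℝ (fun q => f q * f q * wz n ε (-(n : ℤ)) q) p (ey n) = 0 :=
    integral_pderiv_eq_zero ((hf'.mul hf').mul (wz_smooth hε _))
      (hCS _ fun p hp => by rw [image_eq_zero_of_notMem_tsupport hp]; ring) (ey n)
  have hE3 : ∫ p, f p * pderiv' n (ey n) f p * wz n ε (-(n : ℤ)) p
      = (n : ℝ) / 2 * ∫ p, f p * f p * wz n ε (-(n : ℤ) - 1) p := by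
    have hF2 : ∫ p, (2 * (f p * pderiv' n (ey n) f p * wz n ε (-(n : ℤ)) p)
        - (n : ℝ) * (f p * f p * wz n ε (-(n : ℤ) - 1) p)) = 0 := by
      rw [show (fun p => 2 * (f p * pderiv' n (ey n) f p * wz n ε (-(n : ℤ)) p)
          - (n : ℝ) * (f p * f p * wz n ε (-(n : ℤ) - 1) p))
        = (fun p => fderiv ℝ (fun q => f q * f q * wz n ε (-(n : ℤ)) q) p (ey n))
        from funext fun p => by rw [L2 p]; ring]
      exact hIBP2
    have hI1 : Integrable (fun p =>
        2 * (f p * pderiv' n (ey n) f p * wz n ε (-(n : ℤ)) p)) := hIa3.const_mul _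
    have hI2 : Integrable (fun p =>
        (n : ℝ) * (f p * f p * wz n ε (-(n : ℤ) - 1) p)) := hIC.const_mul _
    rw [integral_sub hI1 hI2, integral_const_mul, integral_const_mul] at hF2
    linarith
  -- McKean / Hardy inequality
  have hMpt : ∀ p : (Fin n → ℝ) × ℝ,
      0 ≤ (pderiv' n (ey n) f p) ^ 2 * wz n ε (1 - (n : ℤ)) p
        - (n : ℝ) * (f p * pderiv' n (ey n) f p * wz n ε (-(n : ℤ)) p)
        + (n : ℝ) ^ 2 / 4 * (f p * f p * wz n ε (-(n : ℤ) - 1) p) := by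
    intro p
    by_cases hp : ε < p.2
    · have hcalc : (pderiv' n (ey n) f p) ^ 2 * wz n ε (1 - (n : ℤ)) p
          - (n : ℝ) * (f p * pderiv' n (ey n) f p * wz n ε (-(n : ℤ)) p)
          + (n : ℝ) ^ 2 / 4 * (f p * f p * wz n ε (-(n : ℤ) - 1) p)
          = wz n ε (-(n : ℤ) - 1) p *
              (p.2 * pderiv' n (ey n) f p - (n : ℝ) / 2 * f p) ^ 2 := by
        rw [hWa p hp, hWb p hp]; ring
      rw [hcalc]
      exact mul_nonneg (wz_pos hε _ p).le (sq_nonneg _)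
    · simp [hg0 _ p (hcompl p hp), image_eq_zero_of_notMem_tsupport (hcompl p hp)]
  have hMcKean : (n : ℝ) ^ 2 / 4 * (∫ p, f p * f p * wz n ε (-(n : ℤ) - 1) p)
      ≤ ∫ p, (pderiv' n (ey n) f p) ^ 2 * wz n ε (1 - (n : ℤ)) p := by
    have h0 := integral_nonneg (μ := volume) (Pi.le_def.2 hMpt)
    have hIsub : Integrable (fun p => (pderiv' n (ey n) f p) ^ 2 * wz n ε (1 - (n : ℤ)) p
        - (n : ℝ) * (f p * pderiv' n (ey n) f p * wz n ε (-(n : ℤ)) p)) :=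
      hIa5.sub (hIa3.const_mul _)
    have hICc : Integrable (fun p => (n : ℝ) ^ 2 / 4 * (f p * f p * wz n ε (-(n : ℤ) - 1) p)) :=
      hIC.const_mul _
    have hIa3c : Integrable (fun p =>
        (n : ℝ) * (f p * pderiv' n (ey n) f p * wz n ε (-(n : ℤ)) p)) := hIa3.const_mul _
    rw [integral_add hIsub hICc, integral_sub hIa5 hIa3c, integral_const_mul,
      integral_const_mul, hE3] at h0
    nlinarith [h0]
  have hIa5le : ∫ p, (pderiv' n (ey n) f p) ^ 2 * wz n ε (1 - (n : ℤ)) p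
      ≤ ∫ p, gradSq n f p * wz n ε (1 - (n : ℤ)) p := by
    have hpt : ∀ p : (Fin n → ℝ) × ℝ, 0 ≤ gradSq n f p * wz n ε (1 - (n : ℤ)) p
        - (pderiv' n (ey n) f p) ^ 2 * wz n ε (1 - (n : ℤ)) p := by
      intro p
      have heq : gradSq n f p * wz n ε (1 - (n : ℤ)) p
          - (pderiv' n (ey n) f p) ^ 2 * wz n ε (1 - (n : ℤ)) p
          = (∑ i, (pderiv' n (ex n i) f p) ^ 2) * wz n ε (1 - (n : ℤ)) p := by
        simp only [gradSq]; ring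
      rw [heq]
      exact mul_nonneg (Finset.sum_nonneg fun i _ => sq_nonneg _) (wz_pos hε _ p).le
    have h0 := integral_nonneg (μ := volume) (Pi.le_def.2 hpt)
    rw [integral_sub hIgrad hIa5] at h0
    linarith
  -- quadratic inequality in t and the discriminant
  have hquad : ∀ t : ℝ,
      0 ≤ (∫ p, f p * f p * wz n ε (-(n : ℤ) - 1) p) * (t * t)
        + (2 * ∫ p, f p * hypLap n f p * wz n ε (-(n : ℤ) - 1) p) * t
        + ∫ p, (hypLap n f p) ^ 2 * wz n ε (-(n : ℤ) - 1) p := by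
    intro t
    have hpt : ∀ p : (Fin n → ℝ) × ℝ,
        0 ≤ (hypLap n f p + t * f p) ^ 2 * wz n ε (-(n : ℤ) - 1) p := fun p =>
      mul_nonneg (sq_nonneg _) (wz_pos hε _ p).le
    have h0 := integral_nonneg (μ := volume) (Pi.le_def.2 hpt)
    rw [show (fun p => (hypLap n f p + t * f p) ^ 2 * wz n ε (-(n : ℤ) - 1) p)
        = (fun p => ((hypLap n f p) ^ 2 * wz n ε (-(n : ℤ) - 1) p
          + (2 * t) * (f p * hypLap n f p * wz n ε (-(n : ℤ) - 1) p))
          + (t * t) * (f p * f p * wz n ε (-(n : ℤ) - 1) p))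
      from funext fun p => by ring] at h0
    have hIadd : Integrable (fun p => (hypLap n f p) ^ 2 * wz n ε (-(n : ℤ) - 1) p
        + (2 * t) * (f p * hypLap n f p * wz n ε (-(n : ℤ) - 1) p)) :=
      hIA.add (hIfL.const_mul _)
    have hICc : Integrable (fun p => (t * t) * (f p * f p * wz n ε (-(n : ℤ) - 1) p)) :=
      hIC.const_mul _
    have hIfLc : Integrable (fun p =>
        (2 * t) * (f p * hypLap n f p * wz n ε (-(n : ℤ) - 1) p)) := hIfL.const_mul _
    rw [integral_add hIadd hICc, integral_add hIA hIfLc, integral_const_mul,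
      integral_const_mul] at h0
    nlinarith [h0]
  have hdisc := discrim_le_zero hquad
  rw [discrim] at hdisc
  -- put everything together
  have hC0 : 0 ≤ ∫ p, f p * f p * wz n ε (-(n : ℤ) - 1) p :=
    integral_nonneg fun p => mul_nonneg (mul_self_nonneg _) (wz_pos hε _ p).le
  have hA0 : 0 ≤ ∫ p, (hypLap n f p) ^ 2 * wz n ε (-(n : ℤ) - 1) p :=
    integral_nonneg fun p => mul_nonneg (sq_nonneg _) (wz_pos hε _ p).le
  have hB0 : 0 ≤ ∫ p, gradSq n f p * wz n ε (1 - (n : ℤ)) p := by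
    apply integral_nonneg
    intro p
    apply mul_nonneg _ (wz_pos hε _ p).le
    simp only [gradSq]
    exact add_nonneg (Finset.sum_nonneg fun i _ => sq_nonneg _) (sq_nonneg _)
  -- boundary: identify the set integrals
  have hmeasH : MeasurableSet (upperH n) :=
    (isOpen_lt continuous_const continuous_snd).measurableSet
  have hBset : ∫ q in upperH n, gradSq n f q * q.2 ^ (1 - (n : ℝ))
      = ∫ p, gradSq n f p * wz n ε (1 - (n : ℤ)) p := by
    rw [setIntegral_congr_fun hmeasH
      (g := fun q => gradSq n f q * wz n ε (1 - (n : ℤ)) q) ?_]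
    · exact setIntegral_eq_integral_of_forall_compl_eq_zero fun q hq => by
        rw [hgrad0 q fun hmem => hq (hfH hmem), zero_mul]
    · intro q _
      show gradSq n f q * q.2 ^ (1 - (n : ℝ)) = gradSq n f q * wz n ε (1 - (n : ℤ)) q
      by_cases hts : q ∈ tsupport f
      · have h1 : ε < q.2 := hsup q hts
        rw [wz_eq hε h1.le]
        congr 1
        rw [show (1 - (n : ℝ)) = (((1 - (n : ℤ)) : ℤ) : ℝ) by push_cast; ring,
          Real.rpow_intCast]
      · rw [hgrad0 q hts, zero_mul, zero_mul]
  have hAset : ∫ q in upperH n, (hypLap n f q) ^ 2 * q.2 ^ (-(n : ℝ) - 1)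
      = ∫ p, (hypLap n f p) ^ 2 * wz n ε (-(n : ℤ) - 1) p := by
    rw [setIntegral_congr_fun hmeasH
      (g := fun q => (hypLap n f q) ^ 2 * wz n ε (-(n : ℤ) - 1) q) ?_]
    · exact setIntegral_eq_integral_of_forall_compl_eq_zero fun q hq => by
        rw [hhyp0 q fun hmem => hq (hfH hmem)]
        ring
    · intro q _
      show (hypLap n f q) ^ 2 * q.2 ^ (-(n : ℝ) - 1) = (hypLap n f q) ^ 2 * wz n ε (-(n : ℤ) - 1) q
      by_cases hts : q ∈ tsupport f
      · have h1 : ε < q.2 := hsup q hts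
        rw [wz_eq hε h1.le]
        congr 1
        rw [show (-(n : ℝ) - 1) = (((-(n : ℤ) - 1) : ℤ) : ℝ) by push_cast; ring,
          Real.rpow_intCast]
      · rw [hhyp0 q hts]
        ring
  rw [hBset, hAset]
  -- final arithmetic
  have hB2 : (∫ p, gradSq n f p * wz n ε (1 - (n : ℤ)) p)
      * (∫ p, gradSq n f p * wz n ε (1 - (n : ℤ)) p)
      ≤ (∫ p, f p * f p * wz n ε (-(n : ℤ) - 1) p)
        * ∫ p, (hypLap n f p) ^ 2 * wz n ε (-(n : ℤ) - 1) p := by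
    nlinarith [hdisc, hF1]
  exact buckle_arith hB0 hA0 (by positivity) hB2 (le_trans hMcKean hIa5le)
end
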